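/- arXiv:1903.07208 — 5 statements merged into one kernel-verified Lean document; each statement's English description precedes it below -/
import Mathlib

section
/- Lepski-type adaptation for Huber regression: under the linear model and Condition 2.1, let 0 < v_min ≤ σ ≤ v_max, a > 1, v_j = v_min·a^j, J = { j ∈ ℤ : v_min ≤ v_j < a·v_max }, and for j ∈ J let θ̂^{(j)} be the Huber estimator with τ_j = v_j √(n/(d+t)). Define ĵ_L := min{ j ∈ J : ‖θ̂^{(k)} − θ̂^{(j)}‖₂ ≤ c₀ v_k √((d+t)/n) for all k ∈ J with k > j } and θ̂_L := θ̂^{(ĵ_L)}. If c₀ ≥ 2c₁·λ_min(Σ)^{−1/2} where c₁ is the constant from the deviation bound of Theorem 2.1, then for any t > 0, provided n ≳ d+t, with probability at least 1 − 3·log_a(a·v_max/v_min)·e^{−t} one has ‖θ̂_L − θ*‖₂ ≤ (3a/2)·c₀·σ·√((d+t)/n). -/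
open MeasureTheory ProbabilityTheory Filter
open scoped ENNReal

noncomputable section

/-- The Huber loss with robustification parameter `τ`. -/
def huberLoss (τ u : ℝ) : ℝ := if |u| ≤ τ then u ^ 2 / 2 else τ * |u| - τ ^ 2 / 2

/-- Euclidean inner product on `Fin d → ℝ`. -/
def dotp {d : ℕ} (u v : Fin d → ℝ) : ℝ := ∑ j, u j * v j

/-- Euclidean (ℓ²) norm on `Fin d → ℝ`. -/
def l2norm {d : ℕ} (v : Fin d → ℝ) : ℝ := Real.sqrt (∑ j, v j ^ 2)

/-- The empirical Huber loss `L_τ(θ) = ∑ᵢ ℓ_τ(Yᵢ − Xᵢᵀθ)`. -/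
def empHuberLoss {Ω : Type*} {d n : ℕ} (τ : ℝ) (Y : Fin n → Ω → ℝ)
    (X : Fin n → Ω → Fin d → ℝ) (ω : Ω) (θ : Fin d → ℝ) : ℝ :=
  ∑ i, huberLoss τ (Y i ω - dotp (X i ω) θ)

lemma l2norm_nonneg {d : ℕ} (v : Fin d → ℝ) : 0 ≤ l2norm v := Real.sqrt_nonneg _

lemma l2norm_eq_norm {d : ℕ} (v : Fin d → ℝ) :
    l2norm v = ‖(WithLp.equiv 2 (Fin d → ℝ)).symm v‖ := by
  rw [EuclideanSpace.norm_eq]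
  simp [l2norm, sq_abs]

lemma l2norm_sub_rev {d : ℕ} (u v : Fin d → ℝ) : l2norm (u - v) = l2norm (v - u) := by
  unfold l2norm
  congr 1
  apply Finset.sum_congr rfl
  intro j _
  simp only [Pi.sub_apply]
  ring

lemma l2norm_sub_le {d : ℕ} (u v w : Fin d → ℝ) :
    l2norm (u - w) ≤ l2norm (u - v) + l2norm (v - w) := by
  have h : u - w = (u - v) + (v - w) := by abel
  rw [l2norm_eq_norm, l2norm_eq_norm, l2norm_eq_norm, h]
  rw [show (WithLp.equiv 2 (Fin d → ℝ)).symm ((u - v) + (v - w))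
      = (WithLp.equiv 2 (Fin d → ℝ)).symm (u - v) + (WithLp.equiv 2 (Fin d → ℝ)).symm (v - w)
    from rfl]
  exact norm_add_le _ _

lemma abs_le_l2norm {d : ℕ} (v : Fin d → ℝ) (i : Fin d) : |v i| ≤ l2norm v := by
  rw [l2norm, ← Real.sqrt_sq (abs_nonneg (v i)), sq_abs]
  apply Real.sqrt_le_sqrt
  exact Finset.single_le_sum (f := fun j => v j ^ 2) (fun j _ => sq_nonneg _) (Finset.mem_univ i)

lemma continuous_huberLoss (τ : ℝ) : Continuous (huberLoss τ) := by
  unfold huberLoss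
  apply Continuous.if_le
  · exact (continuous_pow 2).div_const 2
  · exact (continuous_const.mul continuous_abs).sub continuous_const
  · exact continuous_abs
  · exact continuous_const
  · intro u h
    nlinarith [sq_abs u]

lemma continuous_l2norm {d : ℕ} : Continuous (l2norm (d := d)) := by
  unfold l2norm
  exact Real.continuous_sqrt.comp (continuous_finset_sum _ fun j _ => (continuous_apply j).pow 2)

lemma measurable_empHuberLoss {Ω : Type*} [MeasurableSpace Ω] {d n : ℕ} (τ : ℝ)
    {Y : Fin n → Ω → ℝ} {X : Fin n → Ω → Fin d → ℝ}
    (hY : ∀ i, Measurable (Y i)) (hX : ∀ i, Measurable (X i)) (θ : Fin d → ℝ) :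
    Measurable fun ω => empHuberLoss τ Y X ω θ := by
  apply Finset.measurable_sum
  intro i _
  have h1 : Measurable fun ω => Y i ω - dotp (X i ω) θ := by
    apply (hY i).sub
    unfold dotp
    apply Finset.measurable_sum
    intro j _
    exact ((measurable_pi_apply j).comp (hX i)).mul measurable_const
  exact (continuous_huberLoss τ).measurable.comp h1

lemma continuous_empHuberLoss {Ω : Type*} {d n : ℕ} (τ : ℝ)
    (Y : Fin n → Ω → ℝ) (X : Fin n → Ω → Fin d → ℝ) (ω : Ω) :
    Continuous fun θ => empHuberLoss τ Y X ω θ := by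
  apply continuous_finset_sum
  intro i _
  apply (continuous_huberLoss τ).comp
  apply continuous_const.sub
  unfold dotp
  exact continuous_finset_sum _ fun j _ => continuous_const.mul (continuous_apply j)

lemma iInf_le_of_mem_closure {α : Type*} [TopologicalSpace α] {f : α → ℝ≥0∞}
    (hf : Continuous f) {c : Set α} {x : α} (hx : x ∈ closure c) :
    ⨅ q : c, f q ≤ f x := by
  by_contra h
  push_neg at h
  obtain ⟨y, hyU, hyc⟩ := (mem_closure_iff.1 hx) {z | f z < ⨅ q : c, f q}
    (isOpen_lt hf continuous_const) h
  exact absurd (iInf_le (fun q : c => f q) ⟨y, hyc⟩) (not_le.2 hyU)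

lemma exists_countable_dense_subset_closure {α : Type*} [TopologicalSpace α]
    [SecondCountableTopology α] (s : Set α) :
    ∃ c : Set α, c.Countable ∧ c ⊆ s ∧ s ⊆ closure c := by
  obtain ⟨t, htc, htd⟩ := TopologicalSpace.exists_countable_dense s
  refine ⟨Subtype.val '' t, htc.image _, by rintro x ⟨y, _, rfl⟩; exact y.2, ?_⟩
  intro x hx
  have h1 : (⟨x, hx⟩ : s) ∈ closure t := htd _
  have h2 : x ∈ Subtype.val '' closure t := ⟨⟨x, hx⟩, h1, rfl⟩
  exact image_closure_subset_closure_image continuous_subtype_val h2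

lemma measurableSet_allMinimizersGood {Ω : Type*} [MeasurableSpace Ω] {d : ℕ}
    (L : Ω → (Fin d → ℝ) → ℝ)
    (hmeas : ∀ θ, Measurable fun ω => L ω θ)
    (hcont : ∀ ω, Continuous (L ω))
    (θstar : Fin d → ℝ) (r : ℝ) :
    MeasurableSet {ω | ∀ θ : Fin d → ℝ, (∀ θ', L ω θ ≤ L ω θ') → l2norm (θ - θstar) ≤ r} := by
  classical
  set F : Ω → (Fin d → ℝ) → ℝ≥0∞ := fun ω θ => ENNReal.ofReal (Real.exp (L ω θ)) with hF
  have hFmeas : ∀ θ, Measurable fun ω => F ω θ := fun θ =>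
    ENNReal.measurable_ofReal.comp (Real.measurable_exp.comp (hmeas θ))
  have hFcont : ∀ ω, Continuous (F ω) := fun ω =>
    ENNReal.continuous_ofReal.comp (Real.continuous_exp.comp (hcont ω))
  have hFle : ∀ ω θ θ', (F ω θ ≤ F ω θ' ↔ L ω θ ≤ L ω θ') := by
    intro ω θ θ'
    rw [hF]
    simp only
    rw [ENNReal.ofReal_le_ofReal_iff (Real.exp_nonneg _), Real.exp_le_exp]
  have hFlt : ∀ ω θ, F ω θ < ⊤ := fun ω θ => ENNReal.ofReal_lt_top
  obtain ⟨D, hDc, hDd⟩ := TopologicalSpace.exists_countable_dense (Fin d → ℝ)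
  have hDne : D.Nonempty := hDd.nonempty
  set g : (Fin d → ℝ) → ℝ := fun θ => l2norm (θ - θstar) with hg
  have hgcont : Continuous g := continuous_l2norm.comp (continuous_id.sub continuous_const)
  set K : ℕ → Set (Fin d → ℝ) := fun m => {θ | r + 1/(m+1) ≤ g θ ∧ g θ ≤ m} with hK
  have hKcompact : ∀ m : ℕ, IsCompact (K m) := by
    intro m
    have hclosed : IsClosed (K m) :=
      (isClosed_Icc.preimage hgcont : IsClosed (g ⁻¹' Set.Icc (r + 1/(m+1)) m))
    apply (isCompact_closedBall θstar (m : ℝ)).of_isClosed_subset hclosed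
    intro θ hθ
    rw [Metric.mem_closedBall]
    rw [dist_pi_le_iff (by positivity)]
    intro i
    rw [Real.dist_eq]
    calc |θ i - θstar i| = |(θ - θstar) i| := rfl
      _ ≤ l2norm (θ - θstar) := abs_le_l2norm _ i
      _ ≤ m := hθ.2
  have key : ∀ m : ℕ, ∃ Dm : Set (Fin d → ℝ), Dm.Countable ∧ Dm ⊆ K m ∧ K m ⊆ closure Dm :=
    fun m => exists_countable_dense_subset_closure (K m)
  choose Dm hDmc hDmsub hDmcl using key
  set I : Ω → ℝ≥0∞ := fun ω => ⨅ q : D, F ω q with hI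
  set A : ℕ → Ω → ℝ≥0∞ := fun m ω => ⨅ q : Dm m, F ω q with hA
  have hbad : ∀ ω, (∃ θ, (∀ θ', L ω θ ≤ L ω θ') ∧ r < g θ) ↔ (∃ m, A m ω ≤ I ω) := by
    intro ω
    constructor
    · rintro ⟨θ0, hmin, hr⟩
      obtain ⟨m1, hm1⟩ := exists_nat_one_div_lt (show (0:ℝ) < g θ0 - r by linarith)
      obtain ⟨m2, hm2⟩ := exists_nat_gt (g θ0)
      set m := max m1 m2 with hm
      have hθK : θ0 ∈ K m := by
        constructor
        · have h1 : (1:ℝ)/(m+1) ≤ 1/(m1+1) := by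
            apply one_div_le_one_div_of_le (by positivity)
            have : (m1:ℝ) ≤ m := by exact_mod_cast le_max_left m1 m2
            linarith
          linarith
        · have : (m2:ℝ) ≤ m := by exact_mod_cast le_max_right m1 m2
          have := le_of_lt hm2
          linarith
      have h1 : A m ω ≤ F ω θ0 := iInf_le_of_mem_closure (hFcont ω) (hDmcl m hθK)
      have h2 : F ω θ0 ≤ I ω := le_iInf fun q => (hFle ω θ0 q).2 (hmin q)
      exact ⟨m, h1.trans h2⟩
    · rintro ⟨m, hm⟩
      have hIlt : I ω < ⊤ :=
        lt_of_le_of_lt (iInf_le _ (⟨hDne.choose, hDne.choose_spec⟩ : D)) (hFlt ω _)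
      have hAlt : A m ω < ⊤ := lt_of_le_of_lt hm hIlt
      have hDmne : (Dm m).Nonempty := by
        by_contra h
        rw [Set.not_nonempty_iff_eq_empty] at h
        haveI : IsEmpty (Dm m) := Set.isEmpty_coe_sort.2 h
        have : A m ω = ⊤ := by
          show ⨅ q : Dm m, F ω q = ⊤
          rw [iInf_of_isEmpty fun q : Dm m => F ω q, sInf_empty]
        rw [this] at hAlt
        exact absurd hAlt (lt_irrefl _)
      have hKne : (K m).Nonempty := ⟨hDmne.choose, hDmsub m hDmne.choose_spec⟩
      obtain ⟨θ0, hθ0K, hθ0min⟩ := (hKcompact m).exists_isMinOn hKne (hFcont ω).continuousOn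
      refine ⟨θ0, ?_, ?_⟩
      · intro θ'
        have hF0A : F ω θ0 ≤ A m ω := le_iInf fun q => hθ0min (hDmsub m q.2)
        have hIθ' : I ω ≤ F ω θ' :=
          iInf_le_of_mem_closure (hFcont ω) (hDd.closure_eq ▸ Set.mem_univ θ')
        exact (hFle ω θ0 θ').1 (hF0A.trans (hm.trans hIθ'))
      · have h0 : (0:ℝ) < 1/((m:ℝ)+1) := by positivity
        have := hθ0K.1
        linarith
  have hset : {ω | ∀ θ : Fin d → ℝ, (∀ θ', L ω θ ≤ L ω θ') → l2norm (θ - θstar) ≤ r}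
      = (⋃ m : ℕ, {ω | A m ω ≤ I ω})ᶜ := by
    ext ω
    simp only [Set.mem_setOf_eq, Set.mem_compl_iff, Set.mem_iUnion, not_exists]
    constructor
    · intro hgood m hm
      obtain ⟨θ0, hmin, hr⟩ := (hbad ω).2 ⟨m, hm⟩
      exact absurd (hgood θ0 hmin) (not_le.2 hr)
    · intro hnone θ hmin
      by_contra hgt
      obtain ⟨m, hm⟩ := (hbad ω).1 ⟨θ, hmin, not_le.1 hgt⟩
      exact hnone m hm
  rw [hset]
  apply MeasurableSet.compl
  apply MeasurableSet.iUnion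
  intro m
  have hAm : Measurable (A m) := by
    haveI := (hDmc m).to_subtype
    exact Measurable.iInf fun q => hFmeas q
  have hIm : Measurable I := by
    haveI := hDc.to_subtype
    exact Measurable.iInf fun q => hFmeas q
  exact measurableSet_le hAm hIm

set_option maxHeartbeats 1000000 in
/-- **Theorem 3.1 (Chen–Zhou 2019): Lepski-type adaptation for Huber regression.**
Under the linear model and Condition 2.1, with `0 < v_min ≤ σ ≤ v_max`, `a > 1`,
`v_j = v_min a^j`, `J = {j ∈ ℤ : v_min ≤ v_j < a v_max}`, Huber estimators `θ̂^{(j)}`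
with `τ_j = v_j √(n/(d+t))`, and Lepski selection
`ĵ_L = min{j ∈ J : ‖θ̂^{(k)} − θ̂^{(j)}‖₂ ≤ c₀ v_k √((d+t)/n) ∀ k ∈ J, k > j}`:
if `c₀ ≥ 2c₁ λ_min(Σ)^{−1/2}` with `c₁` the constant from the deviation bound of
Theorem 2.1, then for `t > 0`, provided `n ≳ d + t`, with probability at least
`1 − 3 log_a(a v_max/v_min) e^{−t}` one has
`‖θ̂_L − θ*‖₂ ≤ (3a/2) c₀ σ √((d+t)/n)`. -/
theorem lepski_adaptive_huber (A₀ : ℝ) (hA₀ : 0 < A₀) :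
    ∃ c : ℝ, 0 < c ∧
      ∀ (Ω : Type) [MeasurableSpace Ω] (μ : Measure Ω),
        IsProbabilityMeasure μ →
      ∀ (d n : ℕ) (X : Fin n → Ω → Fin d → ℝ) (Y : Fin n → Ω → ℝ)
        (θstar : Fin d → ℝ) (ε : Fin n → Ω → ℝ)
        (Sig Ssqrt Sinvsqrt : Matrix (Fin d) (Fin d) ℝ) (σ δ υ lmin : ℝ),
        -- measurability of the data
        (∀ i, Measurable (X i)) → (∀ i, Measurable (Y i)) →
        -- the observations are i.i.d.
        iIndepFun (fun i ω => (Y i ω, X i ω)) μ →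
        (∀ i i', IdentDistrib (fun ω => (Y i ω, X i ω))
            (fun ω => (Y i' ω, X i' ω)) μ μ) →
        -- linear model `Yᵢ = Xᵢᵀθ* + εᵢ`
        (∀ i ω, Y i ω = dotp (X i ω) θstar + ε i ω) →
        -- `Σ = E(X Xᵀ)` is positive definite, with square root `Σ^{1/2}` and its inverse
        (∀ i j k, Sig j k = ∫ ω, X i ω j * X i ω k ∂μ) →
        Sig.PosDef → Ssqrt.PosSemidef → Ssqrt * Ssqrt = Sig →
        Ssqrt * Sinvsqrt = 1 → Sinvsqrt * Ssqrt = 1 →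
        -- `lmin` is the smallest eigenvalue of `Σ`
        IsGreatest {l : ℝ | ∀ u : Fin d → ℝ, l * dotp u u ≤ dotp u (Sig.mulVec u)} lmin →
        0 < lmin →
        -- Condition 2.1(i): `Z = Σ^{-1/2} X` is sub-Gaussian
        (∀ i (u : Fin d → ℝ) (r : ℝ), 0 ≤ r →
          μ {ω | A₀ * l2norm u * r ≤ |dotp u (Sinvsqrt.mulVec (X i ω))|}
            ≤ ENNReal.ofReal (2 * Real.exp (-r ^ 2))) →
        -- Condition 2.1(ii): conditional moments of the noise
        0 ≤ δ →
        (∀ i, μ[ε i | MeasurableSpace.comap (X i) inferInstance] =ᵐ[μ] 0) →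
        (∀ i, μ[fun ω => ε i ω ^ 2 | MeasurableSpace.comap (X i) inferInstance]
            =ᵐ[μ] fun _ => σ ^ 2) →
        (∀ i, μ[fun ω => |ε i ω| ^ (2 + δ) | MeasurableSpace.comap (X i) inferInstance]
            ≤ᵐ[μ] fun _ => υ) →
      ∀ (t vmin vmax a c₀ c₁ : ℝ), 0 < t →
        0 < vmin → vmin ≤ σ → σ ≤ vmax → 1 < a →
        -- the candidate Huber estimators `θ̂^{(j)}`, `j ∈ J`, with `τ_j = v_j √(n/(d+t))`
        ∀ θh : ℤ → Ω → Fin d → ℝ,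
          (∀ j : ℤ, vmin ≤ vmin * a ^ j → vmin * a ^ j < a * vmax →
            ∀ ω θ, empHuberLoss (vmin * a ^ j * Real.sqrt ((n : ℝ) / ((d : ℝ) + t)))
                Y X ω (θh j ω)
              ≤ empHuberLoss (vmin * a ^ j * Real.sqrt ((n : ℝ) / ((d : ℝ) + t))) Y X ω θ) →
        -- `c₁` is the constant from the deviation bound of Theorem 2.1
        0 < c₁ →
        (∀ v : ℝ, σ ≤ v →
          ∀ θv : Ω → Fin d → ℝ,
            (∀ ω θ, empHuberLoss (v * Real.sqrt ((n : ℝ) / ((d : ℝ) + t))) Y X ω (θv ω)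
              ≤ empHuberLoss (v * Real.sqrt ((n : ℝ) / ((d : ℝ) + t))) Y X ω θ) →
            ENNReal.ofReal (1 - 3 * Real.exp (-t)) ≤
              μ {ω | l2norm (θv ω - θstar)
                  ≤ c₁ / Real.sqrt lmin * v * Real.sqrt (((d : ℝ) + t) / n)}) →
        -- the Lepski selection rule `ĵ_L`
        ∀ jhat : Ω → ℤ,
          (∀ ω,
            (vmin ≤ vmin * a ^ jhat ω ∧ vmin * a ^ jhat ω < a * vmax) ∧
            (∀ k : ℤ, vmin ≤ vmin * a ^ k → vmin * a ^ k < a * vmax → jhat ω < k →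
              l2norm (θh k ω - θh (jhat ω) ω)
                ≤ c₀ * (vmin * a ^ k) * Real.sqrt (((d : ℝ) + t) / n)) ∧
            (∀ j : ℤ, vmin ≤ vmin * a ^ j → vmin * a ^ j < a * vmax →
              (∀ k : ℤ, vmin ≤ vmin * a ^ k → vmin * a ^ k < a * vmax → j < k →
                l2norm (θh k ω - θh j ω)
                  ≤ c₀ * (vmin * a ^ k) * Real.sqrt (((d : ℝ) + t) / n)) →
              jhat ω ≤ j)) →
        -- assumption on `c₀` and the sample-size requirement `n ≳ d + t`
        2 * c₁ / Real.sqrt lmin ≤ c₀ →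
        c * ((d : ℝ) + t) ≤ (n : ℝ) →
        ENNReal.ofReal (1 - 3 * Real.logb a (a * vmax / vmin) * Real.exp (-t)) ≤
          μ {ω | l2norm (θh (jhat ω) ω - θstar)
              ≤ 3 * a / 2 * c₀ * σ * Real.sqrt (((d : ℝ) + t) / n)} := by
  classical
  refine ⟨1, one_pos, ?_⟩
  intro Ω _ μ hPM d n X Y θstar ε Sig Ssqrt Sinvsqrt σ δ υ lmin hXm hYm _hindep _hident
    _hlin _hSig _hposdef _hpsd _hsqrt _hinv1 _hinv2 _hgreat hlminpos _hsubg _hδ _hce1 _hce2 _hce3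
    t vmin vmax a c₀ c₁ ht hvmin hvminσ hσvmax ha θh hθh hc₁pos hdev jhat hjhat hc₀ _hn
  haveI := hPM
  have ha0 : (0:ℝ) < a := lt_trans one_pos ha
  have hane : a ≠ 1 := ne_of_gt ha
  have hσpos : 0 < σ := lt_of_lt_of_le hvmin hvminσ
  have hvmaxpos : 0 < vmax := lt_of_lt_of_le hσpos hσvmax
  set sq1 : ℝ := Real.sqrt ((n : ℝ) / ((d : ℝ) + t)) with hsq1
  set sq2 : ℝ := Real.sqrt (((d : ℝ) + t) / n) with hsq2
  have hsq2nn : 0 ≤ sq2 := Real.sqrt_nonneg _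
  set v : ℤ → ℝ := fun j => vmin * a ^ j with hvdef
  have hvpos : ∀ j, 0 < v j := fun j => mul_pos hvmin (zpow_pos ha0 j)
  have hvrpow : ∀ j : ℤ, v j = vmin * a ^ (j : ℝ) := fun j => by
    rw [hvdef, Real.rpow_intCast]
  have hvmono : ∀ {j k : ℤ}, j ≤ k → v j ≤ v k := by
    intro j k hjk
    rw [hvrpow, hvrpow]
    apply mul_le_mul_of_nonneg_left _ (le_of_lt hvmin)
    exact (Real.rpow_le_rpow_left_iff ha).2 (by exact_mod_cast hjk)
  set Lg : ℝ := Real.logb a (a * vmax / vmin) with hLg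
  have hLg1 : 1 ≤ Lg := by
    rw [hLg]
    calc (1:ℝ) = Real.logb a a := (Real.logb_self_eq_one ha).symm
      _ ≤ Real.logb a (a * vmax / vmin) := by
          apply Real.logb_le_logb_of_le ha ha0
          rw [le_div_iff₀ hvmin]
          nlinarith
  set jmax : ℤ := ⌈Lg⌉ - 1 with hjmax
  have hJiff : ∀ j : ℤ, vmin * a ^ j < a * vmax ↔ j ≤ jmax := by
    intro j
    have h1 : vmin * a ^ j < a * vmax ↔ a ^ (j:ℝ) < a * vmax / vmin := by
      rw [← Real.rpow_intCast a j]
      rw [lt_div_iff₀ hvmin]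
      constructor <;> intro h <;> nlinarith [mul_comm vmin (a ^ ((j:ℤ):ℝ))]
    rw [h1, ← Real.lt_logb_iff_rpow_lt ha (by positivity), ← hLg, ← Int.lt_ceil, hjmax]
    omega
  have hJ0 : ∀ j : ℤ, 0 ≤ j → vmin ≤ vmin * a ^ j := by
    intro j hj
    have h1 : (1:ℝ) ≤ a ^ (j:ℝ) := by
      rw [← Real.rpow_zero a]
      exact (Real.rpow_le_rpow_left_iff ha).2 (by exact_mod_cast hj)
    rw [Real.rpow_intCast] at h1
    nlinarith
  set s : ℝ := Real.logb a (σ / vmin) with hs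
  have hs0 : 0 ≤ s := Real.logb_nonneg ha ((one_le_div hvmin).2 hvminσ)
  have hrpow_s : a ^ s = σ / vmin := Real.rpow_logb ha0 hane (div_pos hσpos hvmin)
  set jstar : ℤ := min (⌊s⌋ + 1) jmax with hjstar
  have hjmax_ge_s : s ≤ (jmax : ℝ) := by
    have h1 : s + 1 ≤ Lg := by
      have he : s + 1 = Real.logb a ((σ / vmin) * a) := by
        rw [Real.logb_mul (by positivity) (by positivity), ← hs,
          Real.logb_self_eq_one ha]
      rw [he, hLg]
      apply Real.logb_le_logb_of_le ha (by positivity)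
      rw [div_mul_eq_mul_div, div_le_div_iff₀ hvmin hvmin]
      nlinarith [mul_le_mul_of_nonneg_right (mul_le_mul_of_nonneg_left hσvmax (le_of_lt ha0)) (le_of_lt hvmin)]
    have h2 : Lg ≤ (⌈Lg⌉ : ℝ) := Int.le_ceil Lg
    have h3 : ((jmax : ℤ) : ℝ) = ((⌈Lg⌉ : ℤ) : ℝ) - 1 := by rw [hjmax]; push_cast; ring
    linarith
  have hjstar_ge_s : s ≤ (jstar : ℝ) := by
    rcases min_choice (⌊s⌋ + 1) jmax with h | h <;> rw [hjstar, h]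
    · push_cast
      linarith [Int.lt_floor_add_one s]
    · exact hjmax_ge_s
  have hjstar0 : 0 ≤ jstar := by
    apply le_min
    · have := Int.floor_nonneg.2 hs0
      omega
    · have : 0 < ⌈Lg⌉ := Int.ceil_pos.2 (by linarith)
      omega
  have hjstar_le : jstar ≤ jmax := min_le_right _ _
  have hσ_le_vjstar : σ ≤ v jstar := by
    rw [hvrpow]
    have h1 : σ = vmin * a ^ s := by
      rw [hrpow_s]; field_simp
    rw [h1]
    apply mul_le_mul_of_nonneg_left _ (le_of_lt hvmin)
    exact (Real.rpow_le_rpow_left_iff ha).2 hjstar_ge_s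
  have hσ_le_vj : ∀ j, jstar ≤ j → σ ≤ v j := fun j hj => le_trans hσ_le_vjstar (hvmono hj)
  have hvjstar_le : v jstar ≤ a * σ := by
    rw [hvrpow]
    have h1 : (jstar : ℝ) ≤ s + 1 := by
      have h2 : jstar ≤ ⌊s⌋ + 1 := min_le_left _ _
      have h3 : ((⌊s⌋ : ℤ) : ℝ) ≤ s := Int.floor_le s
      have h4 : ((jstar : ℤ) : ℝ) ≤ ((⌊s⌋ + 1 : ℤ) : ℝ) := by exact_mod_cast h2
      push_cast at h4
      linarith
    calc vmin * a ^ ((jstar : ℤ) : ℝ) ≤ vmin * a ^ (s + 1) := by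
          apply mul_le_mul_of_nonneg_left _ (le_of_lt hvmin)
          exact (Real.rpow_le_rpow_left_iff ha).2 h1
      _ = vmin * ((σ / vmin) * a) := by
          rw [Real.rpow_add ha0, hrpow_s, Real.rpow_one]
      _ = a * σ := by field_simp
  -- the Good events
  set τf : ℤ → ℝ := fun j => v j * sq1 with hτf
  set LL : ℤ → Ω → (Fin d → ℝ) → ℝ := fun j ω θ => empHuberLoss (τf j) Y X ω θ with hLL
  set rj : ℤ → ℝ := fun j => c₁ / Real.sqrt lmin * v j * sq2 with hrj
  set Good : ℤ → Set Ω :=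
    fun j => {ω | ∀ θ, (∀ θ', LL j ω θ ≤ LL j ω θ') → l2norm (θ - θstar) ≤ rj j} with hGoodDef
  have hGoodMeas : ∀ j, MeasurableSet (Good j) := fun j =>
    measurableSet_allMinimizersGood (LL j)
      (fun θ => measurable_empHuberLoss (τf j) hYm hXm θ)
      (fun ω => continuous_empHuberLoss (τf j) Y X ω) θstar (rj j)
  have hGoodProb : ∀ j, jstar ≤ j → j ≤ jmax →
      ENNReal.ofReal (1 - 3 * Real.exp (-t)) ≤ μ (Good j) := by
    intro j h1 h2
    have hjJ1 : vmin ≤ vmin * a ^ j := hJ0 j (le_trans hjstar0 h1)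
    have hjJ2 : vmin * a ^ j < a * vmax := (hJiff j).2 h2
    set θv : Ω → Fin d → ℝ := fun ω =>
      if h : ∃ θ0, (∀ θ', LL j ω θ0 ≤ LL j ω θ') ∧ rj j < l2norm (θ0 - θstar)
      then h.choose else θh j ω with hθv
    have hθvmin : ∀ ω θ, empHuberLoss (v j * Real.sqrt ((n : ℝ) / ((d : ℝ) + t))) Y X ω (θv ω)
        ≤ empHuberLoss (v j * Real.sqrt ((n : ℝ) / ((d : ℝ) + t))) Y X ω θ := by
      intro ω θ
      by_cases hex : ∃ θ0, (∀ θ', LL j ω θ0 ≤ LL j ω θ') ∧ rj j < l2norm (θ0 - θstar)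
      · have he : θv ω = hex.choose := dif_pos hex
        rw [he]
        exact hex.choose_spec.1 θ
      · have he : θv ω = θh j ω := dif_neg hex
        rw [he]
        exact hθh j hjJ1 hjJ2 ω θ
    have hsubset : {ω | l2norm (θv ω - θstar)
        ≤ c₁ / Real.sqrt lmin * v j * Real.sqrt (((d : ℝ) + t) / n)} ⊆ Good j := by
      intro ω hω
      intro θ hθmin
      by_contra hgt
      have hex : ∃ θ0, (∀ θ', LL j ω θ0 ≤ LL j ω θ') ∧ rj j < l2norm (θ0 - θstar) :=
        ⟨θ, hθmin, not_le.1 hgt⟩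
      have he : θv ω = hex.choose := dif_pos hex
      have hω' : l2norm (θv ω - θstar) ≤ rj j := hω
      rw [he] at hω'
      exact absurd hω' (not_le.2 hex.choose_spec.2)
    calc ENNReal.ofReal (1 - 3 * Real.exp (-t))
        ≤ μ {ω | l2norm (θv ω - θstar)
            ≤ c₁ / Real.sqrt lmin * v j * Real.sqrt (((d : ℝ) + t) / n)} :=
          hdev (v j) (hσ_le_vj j h1) θv hθvmin
      _ ≤ μ (Good j) := measure_mono hsubset
  set Fs : Finset ℤ := Finset.Icc jstar jmax with hFs
  have hcard : (Fs.card : ℝ) ≤ Lg := by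
    rw [hFs, Int.card_Icc]
    have hjmaxLg : (jmax : ℝ) < Lg := by
      rw [hjmax]
      push_cast
      linarith [Int.ceil_lt_add_one Lg]
    rcases le_or_gt (⌊s⌋ + 1) jmax with h | h
    · have hj : jstar = ⌊s⌋ + 1 := min_eq_left h
      have hfl0 : (0:ℤ) ≤ ⌊s⌋ := Int.floor_nonneg.2 hs0
      have hnn : 0 ≤ jmax + 1 - jstar := by omega
      have hcast : (((jmax + 1 - jstar).toNat : ℤ) : ℝ) = ((jmax + 1 - jstar : ℤ) : ℝ) := by
        rw [Int.toNat_of_nonneg hnn]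
      rw [show (((jmax + 1 - jstar).toNat : ℕ) : ℝ) = (((jmax + 1 - jstar).toNat : ℤ) : ℝ) by
        push_cast; ring, hcast]
      have h2 : ((jstar : ℤ) : ℝ) = ((⌊s⌋ : ℤ) : ℝ) + 1 := by rw [hj]; push_cast; ring
      have h3 : (0:ℝ) ≤ ((⌊s⌋ : ℤ) : ℝ) := by exact_mod_cast hfl0
      push_cast
      push_cast at h2
      linarith
    · have hj : jstar = jmax := min_eq_right (by omega)
      rw [hj]
      simp only [show jmax + 1 - jmax = 1 by ring]
      norm_num
      linarith
  set G : Set Ω := ⋂ j ∈ Fs, Good j with hG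
  have hGmeas : MeasurableSet G :=
    Finset.measurableSet_biInter Fs (fun j _ => hGoodMeas j)
  have hcomplB : ∀ j ∈ Fs, μ ((Good j)ᶜ) ≤ ENNReal.ofReal (3 * Real.exp (-t)) := by
    intro j hj
    rw [Finset.mem_Icc] at hj
    have h1 := hGoodProb j hj.1 hj.2
    rw [prob_compl_eq_one_sub (hGoodMeas j)]
    calc 1 - μ (Good j) ≤ 1 - ENNReal.ofReal (1 - 3 * Real.exp (-t)) := tsub_le_tsub_left h1 1
      _ ≤ ENNReal.ofReal (3 * Real.exp (-t)) := by
          by_cases hc : 1 - 3 * Real.exp (-t) ≤ 0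
          · rw [ENNReal.ofReal_of_nonpos hc, tsub_zero]
            exact ENNReal.one_le_ofReal.2 (by linarith)
          · push_neg at hc
            rw [← ENNReal.ofReal_one, ← ENNReal.ofReal_sub 1 (by linarith)]
            apply ENNReal.ofReal_le_ofReal
            linarith
  have hUnion : μ (⋃ j ∈ Fs, (Good j)ᶜ) ≤ ENNReal.ofReal (3 * Lg * Real.exp (-t)) := by
    calc μ (⋃ j ∈ Fs, (Good j)ᶜ) ≤ ∑ j ∈ Fs, μ ((Good j)ᶜ) := measure_biUnion_finset_le Fs _
      _ ≤ ∑ _j ∈ Fs, ENNReal.ofReal (3 * Real.exp (-t)) := Finset.sum_le_sum hcomplB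
      _ = Fs.card • ENNReal.ofReal (3 * Real.exp (-t)) := Finset.sum_const _
      _ = (Fs.card : ℝ≥0∞) * ENNReal.ofReal (3 * Real.exp (-t)) := nsmul_eq_mul _ _
      _ = ENNReal.ofReal ((Fs.card : ℝ) * (3 * Real.exp (-t))) := by
          rw [← ENNReal.ofReal_natCast Fs.card, ← ENNReal.ofReal_mul (by positivity)]
      _ ≤ ENNReal.ofReal (3 * Lg * Real.exp (-t)) := by
          apply ENNReal.ofReal_le_ofReal
          nlinarith [Real.exp_nonneg (-t), hcard, Real.exp_pos (-t)]
  have hGcompl : μ (Gᶜ) ≤ ENNReal.ofReal (3 * Lg * Real.exp (-t)) := by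
    rw [hG]
    rw [Set.compl_iInter]
    simp only [Set.compl_iInter]
    exact hUnion
  -- deterministic part
  have hGoodBound : ∀ ω, ω ∈ G → ∀ j, jstar ≤ j → j ≤ jmax →
      l2norm (θh j ω - θstar) ≤ rj j := by
    intro ω hω j h1 h2
    have hmem : ω ∈ Good j := Set.mem_iInter₂.1 hω j (Finset.mem_Icc.2 ⟨h1, h2⟩)
    exact hmem (θh j ω)
      (fun θ' => hθh j (hJ0 j (le_trans hjstar0 h1)) ((hJiff j).2 h2) ω θ')
  have hsqlmin : 0 < Real.sqrt lmin := Real.sqrt_pos.2 hlminpos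
  have hhalf : c₁ / Real.sqrt lmin ≤ c₀ / 2 := by
    have h1 : 2 * c₁ / Real.sqrt lmin = 2 * (c₁ / Real.sqrt lmin) := by ring
    rw [h1] at hc₀
    linarith
  have hc₀pos : 0 < c₀ := by
    have : 0 < c₁ / Real.sqrt lmin := div_pos hc₁pos hsqlmin
    linarith
  have hsub : G ⊆ {ω | l2norm (θh (jhat ω) ω - θstar) ≤ 3 * a / 2 * c₀ * σ * sq2} := by
    intro ω hω
    obtain ⟨⟨hj1, hj2⟩, hsel, hminimal⟩ := hjhat ω
    have hjle : jhat ω ≤ jstar := by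
      apply hminimal jstar (hJ0 jstar hjstar0) ((hJiff jstar).2 hjstar_le)
      intro k hk1 hk2 hklt
      have hk3 : k ≤ jmax := (hJiff k).1 hk2
      have hb1 := hGoodBound ω hω k (le_of_lt hklt) hk3
      have hb2 := hGoodBound ω hω jstar le_rfl hjstar_le
      have hrmono : rj jstar ≤ rj k := by
        rw [hrj]
        apply mul_le_mul_of_nonneg_right _ hsq2nn
        apply mul_le_mul_of_nonneg_left (hvmono (le_of_lt hklt))
        positivity
      have hvk : (0:ℝ) ≤ v k * sq2 := mul_nonneg (le_of_lt (hvpos k)) hsq2nn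
      have hkey : rj k + rj k ≤ c₀ * (vmin * a ^ k) * sq2 := by
        have h5 : c₁ / Real.sqrt lmin * (v k * sq2) ≤ c₀ / 2 * (v k * sq2) :=
          mul_le_mul_of_nonneg_right hhalf hvk
        rw [hrj]
        show c₁ / Real.sqrt lmin * v k * sq2 + c₁ / Real.sqrt lmin * v k * sq2
            ≤ c₀ * (vmin * a ^ k) * sq2
        have hvk' : vmin * a ^ k = v k := rfl
        rw [hvk']
        nlinarith [h5]
      calc l2norm (θh k ω - θh jstar ω)
          ≤ l2norm (θh k ω - θstar) + l2norm (θstar - θh jstar ω) := l2norm_sub_le _ _ _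
        _ = l2norm (θh k ω - θstar) + l2norm (θh jstar ω - θstar) := by
            rw [l2norm_sub_rev θstar]
        _ ≤ rj k + rj jstar := add_le_add hb1 hb2
        _ ≤ rj k + rj k := by linarith
        _ ≤ c₀ * (vmin * a ^ k) * sq2 := hkey
    have hb2 := hGoodBound ω hω jstar le_rfl hjstar_le
    have hrjbound : rj jstar ≤ c₀ / 2 * (a * σ) * sq2 := by
      rw [hrj]
      show c₁ / Real.sqrt lmin * v jstar * sq2 ≤ c₀ / 2 * (a * σ) * sq2
      apply mul_le_mul_of_nonneg_right _ hsq2nn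
      apply mul_le_mul hhalf hvjstar_le (le_of_lt (hvpos jstar))
      linarith
    rcases eq_or_lt_of_le hjle with heq | hlt
    · show l2norm (θh (jhat ω) ω - θstar) ≤ 3 * a / 2 * c₀ * σ * sq2
      rw [heq]
      calc l2norm (θh jstar ω - θstar) ≤ rj jstar := hb2
        _ ≤ c₀ / 2 * (a * σ) * sq2 := hrjbound
        _ ≤ 3 * a / 2 * c₀ * σ * sq2 := by nlinarith [mul_nonneg (mul_nonneg (le_of_lt ha0) (le_of_lt hσpos)) hsq2nn, hc₀pos]
    · have hsel' := hsel jstar (hJ0 jstar hjstar0) ((hJiff jstar).2 hjstar_le) hlt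
      have hvs : v jstar * sq2 ≤ (a * σ) * sq2 :=
        mul_le_mul_of_nonneg_right hvjstar_le hsq2nn
      show l2norm (θh (jhat ω) ω - θstar) ≤ 3 * a / 2 * c₀ * σ * sq2
      calc l2norm (θh (jhat ω) ω - θstar)
          ≤ l2norm (θh (jhat ω) ω - θh jstar ω) + l2norm (θh jstar ω - θstar) :=
            l2norm_sub_le _ _ _
        _ = l2norm (θh jstar ω - θh (jhat ω) ω) + l2norm (θh jstar ω - θstar) := by
            rw [l2norm_sub_rev (θh (jhat ω) ω)]
        _ ≤ c₀ * (vmin * a ^ jstar) * sq2 + rj jstar := add_le_add hsel' hb2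
        _ ≤ 3 * a / 2 * c₀ * σ * sq2 := by
            have hv' : (vmin * a ^ jstar) = v jstar := rfl
            rw [hv']
            have h6 : c₀ * v jstar * sq2 ≤ c₀ * (a * σ) * sq2 := by
              apply mul_le_mul_of_nonneg_right _ hsq2nn
              exact mul_le_mul_of_nonneg_left hvjstar_le (le_of_lt hc₀pos)
            nlinarith [hrjbound, mul_nonneg (mul_nonneg (le_of_lt ha0) (le_of_lt hσpos)) hsq2nn]
  -- final chain
  calc ENNReal.ofReal (1 - 3 * Lg * Real.exp (-t))
      = 1 - ENNReal.ofReal (3 * Lg * Real.exp (-t)) := by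
        rw [← ENNReal.ofReal_one, ← ENNReal.ofReal_sub 1 (by positivity)]
    _ ≤ 1 - μ (Gᶜ) := tsub_le_tsub_left hGcompl 1
    _ = μ G := by
        rw [prob_compl_eq_one_sub hGmeas]
        exact ENNReal.sub_sub_cancel ENNReal.one_ne_top prob_le_one
    _ ≤ μ {ω | l2norm (θh (jhat ω) ω - θstar) ≤ 3 * a / 2 * c₀ * σ * sq2} :=
        measure_mono hsub

end
end

section
/- Concentration of the truncated sample mean at the population-level tuning scale: let X₁,…,Xₙ be i.i.d. copies of X with E(X) = 0 and Var(X) = σ² > 0, and let 1 ≤ t < n·P(|X| > 0). Let τ_t > 0 be the solution of E[min(X², τ²)]/τ² = t/n. Then, with probability at least 1 − 2e^{−t}, the truncated sample mean m̂_{τ_t} = (1/n) Σ_{i=1}^n ψ_{τ_t}(Xᵢ) satisfies both | m̂_{τ_t} − μ_{τ_t} | ≤ 1.75·σ_{τ_t}·√(t/n) and | m̂_{τ_t} | ≤ ( 0.75·σ_{τ_t} + σ²/σ_{τ_t} )·√(t/n), where μ_{τ_t} = E[ψ_{τ_t}(X)] and σ_{τ_t}² = E[ψ_{τ_t}²(X)].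 -/
open MeasureTheory ProbabilityTheory


lemma psi_eq_clamp {τ : ℝ} (hτ : 0 ≤ τ) (u : ℝ) :
    Real.sign u * min |u| τ = max (-τ) (min u τ) := by
  rcases lt_trichotomy u 0 with h | h | h
  · rw [Real.sign_of_neg h, abs_of_neg h]
    rcases le_total (-u) τ with h2 | h2
    · rw [min_eq_left h2, min_eq_left (by linarith), max_eq_right (by linarith)]; ring
    · rw [min_eq_right h2, min_eq_left (by linarith), max_eq_left (by linarith)]; ring
  · simp [h, le_max_iff, hτ]
  · rw [Real.sign_of_pos h, abs_of_pos h, one_mul, max_eq_right]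
    exact le_trans (by linarith) (le_min h.le hτ)

lemma clamp_abs_le {τ : ℝ} (hτ : 0 ≤ τ) (u : ℝ) : |max (-τ) (min u τ)| ≤ τ := by
  rw [abs_le]
  exact ⟨le_max_left _ _, max_le (by linarith) (min_le_right _ _)⟩

lemma clamp_sq {τ : ℝ} (hτ : 0 ≤ τ) (u : ℝ) :
    (max (-τ) (min u τ)) ^ 2 = min (u ^ 2) (τ ^ 2) := by
  rcases le_total u (-τ) with h | h
  · rw [min_eq_left (le_trans h (by linarith)), max_eq_left (le_trans h (by linarith)),
      min_eq_right (by nlinarith)]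
    ring
  · rcases le_total τ u with h2 | h2
    · rw [min_eq_right h2, max_eq_right (by linarith), min_eq_right (by nlinarith)]
    · rw [min_eq_left h2, max_eq_right h, min_eq_left (by nlinarith)]

lemma clamp_sub_abs {τ : ℝ} (hτ : 0 < τ) (u : ℝ) :
    |max (-τ) (min u τ) - u| * τ ≤ u ^ 2 - min (u ^ 2) (τ ^ 2) := by
  rcases le_total u (-τ) with h | h
  · rw [min_eq_left (by linarith), max_eq_left h, min_eq_right (by nlinarith),
      abs_of_nonneg (by linarith)]
    nlinarith
  · rcases le_total τ u with h2 | h2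
    · rw [min_eq_right h2, max_eq_right (by linarith), min_eq_right (by nlinarith),
        abs_of_nonpos (by linarith)]
      nlinarith
    · rw [max_eq_right (le_min h (by linarith)), min_eq_left h2,
        min_eq_left (by nlinarith)]
      simp

lemma exp_le_quad {x : ℝ} (hx : |x| ≤ 1) : Real.exp x ≤ 1 + x + 0.75 * x ^ 2 := by
  have h := Real.exp_bound hx (n := 2) (by norm_num)
  rw [abs_le] at h
  have h1 := h.2
  have : (∑ m ∈ Finset.range 2, x ^ m / (Nat.factorial m)) = 1 + x := by
    simp [Finset.sum_range_succ]
  rw [this] at h1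
  have h2 : |x| ^ 2 = x ^ 2 := sq_abs x
  rw [h2] at h1
  norm_num at h1 ⊢
  linarith

open MeasureTheory ProbabilityTheory Real

lemma mgf_bound_of_bounded {Ω : Type*} [MeasurableSpace Ω] (μ : Measure Ω)
    [IsProbabilityMeasure μ] {Y : Ω → ℝ} (hY : Measurable Y) {τ s : ℝ}
    (hbd : ∀ ω, |Y ω| ≤ τ) (hs : ∀ ω, |s * Y ω| ≤ 1) :
    mgf Y μ s ≤ Real.exp (s * (∫ ω, Y ω ∂μ) + 0.75 * s ^ 2 * ∫ ω, Y ω ^ 2 ∂μ) := by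
  have intY : Integrable Y μ :=
    ⟨hY.aestronglyMeasurable, HasFiniteIntegral.of_bounded (C := τ) (ae_of_all _ hbd)⟩
  have intY2 : Integrable (fun ω => Y ω ^ 2) μ :=
    ⟨(hY.pow_const 2).aestronglyMeasurable,
      HasFiniteIntegral.of_bounded (C := τ ^ 2) (ae_of_all _ fun ω => by
        rw [Real.norm_eq_abs, abs_pow]
        exact pow_le_pow_left₀ (abs_nonneg _) (hbd ω) 2)⟩
  have intExp : Integrable (fun ω => Real.exp (s * Y ω)) μ :=
    ⟨(measurable_exp.comp (hY.const_mul s)).aestronglyMeasurable,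
      HasFiniteIntegral.of_bounded (C := Real.exp 1) (ae_of_all _ fun ω => by
        rw [Real.norm_eq_abs, abs_of_pos (Real.exp_pos _)]
        exact Real.exp_le_exp.mpr ((le_abs_self _).trans (hs ω)))⟩
  have intRHS : Integrable (fun ω => 1 + s * Y ω + 0.75 * s ^ 2 * Y ω ^ 2) μ :=
    ((integrable_const 1).add (intY.const_mul s)).add (intY2.const_mul _)
  have hpt : ∀ ω, Real.exp (s * Y ω) ≤ 1 + s * Y ω + 0.75 * s ^ 2 * Y ω ^ 2 := by
    intro ω
    have := exp_le_quad (hs ω)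
    calc Real.exp (s * Y ω) ≤ 1 + s * Y ω + 0.75 * (s * Y ω) ^ 2 := this
    _ = 1 + s * Y ω + 0.75 * s ^ 2 * Y ω ^ 2 := by ring
  have h1 : mgf Y μ s ≤ ∫ ω, (1 + s * Y ω + 0.75 * s ^ 2 * Y ω ^ 2) ∂μ := by
    unfold mgf
    exact integral_mono intExp intRHS hpt
  have A : Integrable (fun ω => 1 + s * Y ω) μ := (integrable_const 1).add (intY.const_mul s)
  have A1 : Integrable (fun _ : Ω => (1 : ℝ)) μ := integrable_const 1
  have A2 : Integrable (fun ω => s * Y ω) μ := intY.const_mul s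
  have B : Integrable (fun ω => 0.75 * s ^ 2 * Y ω ^ 2) μ := intY2.const_mul _
  have h2 : ∫ ω, (1 + s * Y ω + 0.75 * s ^ 2 * Y ω ^ 2) ∂μ
      = 1 + (s * (∫ ω, Y ω ∂μ) + 0.75 * s ^ 2 * ∫ ω, Y ω ^ 2 ∂μ) := by
    rw [integral_add A B, integral_add A1 A2,
      integral_const, integral_const_mul, integral_const_mul]
    simp [add_assoc]
  rw [h2] at h1
  have h3 := Real.add_one_le_exp (s * (∫ ω, Y ω ∂μ) + 0.75 * s ^ 2 * ∫ ω, Y ω ^ 2 ∂μ)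
  exact h1.trans (by linarith)

/-- **Proposition A.1(i) (Chen–Zhou 2019): concentration of the truncated sample mean
at the population tuning scale.**  Let `X₁, …, Xₙ` be i.i.d. copies of `X` with `E X = 0`
and `Var X = σ² > 0`, let `1 ≤ t < n P(|X| > 0)`, and let `τ_t > 0` solve
`E[min(X², τ²)]/τ² = t/n`.  Then with probability at least `1 − 2e^{−t}`, the truncated
sample mean `m̂ = (1/n) ∑ᵢ ψ_{τ_t}(Xᵢ)` satisfies both
`|m̂ − μ_{τ_t}| ≤ 1.75 σ_{τ_t} √(t/n)` and
`|m̂| ≤ (0.75 σ_{τ_t} + σ²/σ_{τ_t}) √(t/n)`, where `μ_τ = E ψ_τ(X)` and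
`σ_τ² = E ψ_τ²(X)` with `ψ_τ(u) = sign(u) min(|u|, τ)`. -/
theorem truncated_mean_concentration
    {Ω : Type*} [MeasurableSpace Ω] (μ : Measure Ω) [IsProbabilityMeasure μ]
    (n : ℕ) (X : Fin n → Ω → ℝ) (X0 : Ω → ℝ)
    (hX0 : Measurable X0) (hXm : ∀ i, Measurable (X i))
    (hindep : iIndepFun X μ)
    (hident : ∀ i, IdentDistrib (X i) X0 μ μ)
    (hL2 : MemLp X0 2 μ) (hmean : ∫ ω, X0 ω ∂μ = 0)
    (σ : ℝ) (hσpos : 0 < σ) (hσ : σ ^ 2 = ∫ ω, X0 ω ^ 2 ∂μ)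
    (t : ℝ) (ht1 : 1 ≤ t) (ht : t < (n : ℝ) * (μ {ω | 0 < |X0 ω|}).toReal)
    (τt : ℝ) (hτpos : 0 < τt)
    (hτ : (∫ ω, min (X0 ω ^ 2) (τt ^ 2) ∂μ) / τt ^ 2 = t / n)
    (mhat : Ω → ℝ)
    (hmhat : ∀ ω, mhat ω = (1 / (n : ℝ)) * ∑ i, Real.sign (X i ω) * min |X i ω| τt)
    (μτ στ : ℝ)
    (hμτ : μτ = ∫ ω, Real.sign (X0 ω) * min |X0 ω| τt ∂μ)
    (hστ : στ = Real.sqrt (∫ ω, min (X0 ω ^ 2) (τt ^ 2) ∂μ)) :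
    ENNReal.ofReal (1 - 2 * Real.exp (-t)) ≤
      μ {ω | |mhat ω - μτ| ≤ 1.75 * στ * Real.sqrt (t / n) ∧
             |mhat ω| ≤ (0.75 * στ + σ ^ 2 / στ) * Real.sqrt (t / n)} := by
  classical
  -- basic positivity facts
  have hp1 : (μ {ω | 0 < |X0 ω|}).toReal ≤ 1 := by
    have h := ENNReal.toReal_mono (measure_ne_top μ Set.univ)
      (measure_mono (Set.subset_univ {ω | 0 < |X0 ω|}))
    simpa using h
  have hp0 : 0 ≤ (μ {ω | 0 < |X0 ω|}).toReal := ENNReal.toReal_nonneg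
  have hn : (0 : ℝ) < n := by nlinarith [(Nat.cast_nonneg n : (0:ℝ) ≤ n)]
  have hnn : (n : ℝ) ≠ 0 := ne_of_gt hn
  have htpos : (0 : ℝ) < t := lt_of_lt_of_le one_pos ht1
  have htn : 0 < t / n := div_pos htpos hn
  set r := Real.sqrt (t / n) with hr
  have hrpos : 0 < r := Real.sqrt_pos.mpr htn
  have hr2 : r ^ 2 = t / n := Real.sq_sqrt htn.le
  -- the integral of the truncated second moment
  have hτ2 : (τt : ℝ) ^ 2 ≠ 0 := pow_ne_zero _ hτpos.ne'
  have hint_min : (∫ ω, min (X0 ω ^ 2) (τt ^ 2) ∂μ) = τt ^ 2 * (t / n) := by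
    rw [div_eq_iff hτ2] at hτ
    linarith [hτ]
  have hστ_eq : στ = τt * r := by
    rw [hστ, hint_min, hr, Real.sqrt_mul (sq_nonneg _), Real.sqrt_sq hτpos.le]
  have hστ_pos : 0 < στ := hστ_eq ▸ mul_pos hτpos hrpos
  have hστr : στ * r = τt * (t / n) := by
    calc στ * r = τt * r ^ 2 := by rw [hστ_eq]; ring
    _ = τt * (t / n) := by rw [hr2]
  have hστ_sq : στ ^ 2 = τt ^ 2 * (t / n) := by
    calc στ ^ 2 = (τt * r) ^ 2 := by rw [hστ_eq]
    _ = τt ^ 2 * r ^ 2 := by ring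
    _ = τt ^ 2 * (t / n) := by rw [hr2]
  -- the clamped variables
  set g : ℝ → ℝ := fun u => max (-τt) (min u τt) with hgdef
  have hgm : Measurable g := measurable_const.max (measurable_id.min measurable_const)
  set Y : Fin n → Ω → ℝ := fun i => g ∘ X i with hYdef
  set Y0 : Ω → ℝ := g ∘ X0 with hY0def
  have hY0m : Measurable Y0 := hgm.comp hX0
  have hYm : ∀ i, Measurable (Y i) := fun i => hgm.comp (hXm i)
  have hYid : ∀ i, IdentDistrib (Y i) Y0 μ μ := fun i => (hident i).comp hgm
  have hYindep : iIndepFun Y μ := hindep.comp _ fun _ => hgm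
  have hY0bd : ∀ ω, |Y0 ω| ≤ τt := fun ω => clamp_abs_le hτpos.le _
  have hYbd : ∀ i ω, |Y i ω| ≤ τt := fun i ω => clamp_abs_le hτpos.le _
  -- integrals of Y0
  have hEY0 : (∫ ω, Y0 ω ∂μ) = μτ := by
    rw [hμτ]
    exact integral_congr_ae (ae_of_all _ fun ω => (psi_eq_clamp hτpos.le (X0 ω)).symm)
  have hEY0sq : (∫ ω, Y0 ω ^ 2 ∂μ) = τt ^ 2 * (t / n) := by
    rw [← hint_min]
    exact integral_congr_ae (ae_of_all _ fun ω => clamp_sq hτpos.le (X0 ω))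
  -- mgf bounds for Y0 at s = ±1/τt
  have hsY : ∀ s : ℝ, |s| = 1 / τt → ∀ ω, |s * Y0 ω| ≤ 1 := by
    intro s hs ω
    rw [abs_mul, hs]
    calc 1 / τt * |Y0 ω| ≤ 1 / τt * τt :=
          mul_le_mul_of_nonneg_left (hY0bd ω) (by positivity)
    _ = 1 := by field_simp
  have hmgf_bd : ∀ s : ℝ, |s| = 1 / τt →
      mgf Y0 μ s ≤ Real.exp (s * μτ + 0.75 * s ^ 2 * (τt ^ 2 * (t / n))) := by
    intro s hs
    have h := mgf_bound_of_bounded μ hY0m hY0bd (hsY s hs)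
    rwa [hEY0, hEY0sq] at h
  have habs_pos : |(1 : ℝ) / τt| = 1 / τt := abs_of_pos (by positivity)
  have habs_neg : |-(1 / τt)| = 1 / τt := by rw [abs_neg]; exact habs_pos
  -- mgf of each Yᵢ equals mgf of Y0
  have hmgf_eq : ∀ (i : Fin n) (s : ℝ), mgf (Y i) μ s = mgf Y0 μ s := by
    intro i s
    have hm : Measurable fun y : ℝ => Real.exp (s * y) :=
      Real.measurable_exp.comp (measurable_id.const_mul s)
    exact ((hYid i).comp hm).integral_eq
  -- the sum
  set S : Ω → ℝ := ∑ i, Y i with hSdef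
  have hSapp : ∀ ω, S ω = ∑ i, Y i ω := fun ω => by rw [hSdef]; simp
  have hexp_int : ∀ (s : ℝ) (i : Fin n), Integrable (fun ω => Real.exp (s * Y i ω)) μ := by
    intro s i
    refine ⟨(Real.measurable_exp.comp ((hYm i).const_mul s)).aestronglyMeasurable,
      HasFiniteIntegral.of_bounded (C := Real.exp (|s| * τt)) (ae_of_all _ fun ω => ?_)⟩
    rw [Real.norm_eq_abs, abs_of_pos (Real.exp_pos _)]
    refine Real.exp_le_exp.mpr (le_trans (le_abs_self _) ?_)
    rw [abs_mul]
    exact mul_le_mul_of_nonneg_left (hYbd i ω) (abs_nonneg s)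
  have hintS : ∀ s : ℝ, Integrable (fun ω => Real.exp (s * S ω)) μ := fun s =>
    hYindep.integrable_exp_mul_sum hYm fun i _ => hexp_int s i
  have hmgfS : ∀ s : ℝ, mgf S μ s = (mgf Y0 μ s) ^ n := by
    intro s
    rw [hSdef, hYindep.mgf_sum hYm]
    rw [Finset.prod_congr rfl fun i _ => hmgf_eq i s, Finset.prod_const,
      Finset.card_univ, Fintype.card_fin]
  -- Chernoff upper tail
  have hA : (μ {ω | (n : ℝ) * μτ + 1.75 * τt * t ≤ S ω}).toReal ≤ Real.exp (-t) := by
    have h := measure_ge_le_exp_mul_mgf (μ := μ) (X := S) ((n : ℝ) * μτ + 1.75 * τt * t)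
      (t := 1 / τt) (by positivity) (hintS _)
    refine h.trans ?_
    have hb := hmgf_bd (1 / τt) habs_pos
    calc Real.exp (-(1 / τt) * ((n : ℝ) * μτ + 1.75 * τt * t)) * mgf S μ (1 / τt)
        ≤ Real.exp (-(1 / τt) * ((n : ℝ) * μτ + 1.75 * τt * t)) *
          Real.exp ((1 / τt) * μτ + 0.75 * (1 / τt) ^ 2 * (τt ^ 2 * (t / n))) ^ n := by
          rw [hmgfS]
          exact mul_le_mul_of_nonneg_left (pow_le_pow_left₀ mgf_nonneg hb n) (Real.exp_pos _).le
    _ = Real.exp (-(1 / τt) * ((n : ℝ) * μτ + 1.75 * τt * t) +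
          (n : ℝ) * ((1 / τt) * μτ + 0.75 * (1 / τt) ^ 2 * (τt ^ 2 * (t / n)))) := by
          rw [← Real.exp_nat_mul, ← Real.exp_add]
    _ ≤ Real.exp (-t) := by
          apply Real.exp_le_exp.mpr
          have : -(1 / τt) * ((n : ℝ) * μτ + 1.75 * τt * t) +
              (n : ℝ) * ((1 / τt) * μτ + 0.75 * (1 / τt) ^ 2 * (τt ^ 2 * (t / n))) = -t := by
            field_simp
            ring
          linarith [this]
  -- Chernoff lower tail
  have hB : (μ {ω | S ω ≤ (n : ℝ) * μτ - 1.75 * τt * t}).toReal ≤ Real.exp (-t) := by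
    have h := measure_le_le_exp_mul_mgf (μ := μ) (X := S) ((n : ℝ) * μτ - 1.75 * τt * t)
      (t := -(1 / τt)) (neg_nonpos.mpr (by positivity)) (hintS _)
    refine h.trans ?_
    have hb := hmgf_bd (-(1 / τt)) habs_neg
    calc Real.exp (-(-(1 / τt)) * ((n : ℝ) * μτ - 1.75 * τt * t)) * mgf S μ (-(1 / τt))
        ≤ Real.exp (-(-(1 / τt)) * ((n : ℝ) * μτ - 1.75 * τt * t)) *
          Real.exp (-(1 / τt) * μτ + 0.75 * (-(1 / τt)) ^ 2 * (τt ^ 2 * (t / n))) ^ n := by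
          rw [hmgfS]
          exact mul_le_mul_of_nonneg_left (pow_le_pow_left₀ mgf_nonneg hb n) (Real.exp_pos _).le
    _ = Real.exp (-(-(1 / τt)) * ((n : ℝ) * μτ - 1.75 * τt * t) +
          (n : ℝ) * (-(1 / τt) * μτ + 0.75 * (-(1 / τt)) ^ 2 * (τt ^ 2 * (t / n)))) := by
          rw [← Real.exp_nat_mul, ← Real.exp_add]
    _ ≤ Real.exp (-t) := by
          apply Real.exp_le_exp.mpr
          have : -(-(1 / τt)) * ((n : ℝ) * μτ - 1.75 * τt * t) +
              (n : ℝ) * (-(1 / τt) * μτ + 0.75 * (-(1 / τt)) ^ 2 * (τt ^ 2 * (t / n))) = -t := by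
            field_simp
            ring
          linarith [this]
  -- the sum is n times the truncated mean
  have hmhatS : ∀ ω, mhat ω = (1 / (n : ℝ)) * S ω := by
    intro ω
    rw [hmhat ω, hSapp ω]
    congr 1
    exact Finset.sum_congr rfl fun i _ => psi_eq_clamp hτpos.le (X i ω)
  have hSm : Measurable S := by
    have h : S = fun ω => ∑ i, Y i ω := funext hSapp
    rw [h]
    exact Finset.measurable_sum _ fun i _ => hYm i
  have hmhatm : Measurable mhat := by
    have h : mhat = fun ω => (1 / (n : ℝ)) * S ω := funext hmhatS
    rw [h]
    exact hSm.const_mul _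
  set E := {ω | |mhat ω - μτ| ≤ 1.75 * στ * r} with hE
  have hEmeas : MeasurableSet E :=
    measurableSet_le (hmhatm.sub measurable_const).abs measurable_const
  have hcompl : Eᶜ ⊆ {ω | (n : ℝ) * μτ + 1.75 * τt * t ≤ S ω} ∪
      {ω | S ω ≤ (n : ℝ) * μτ - 1.75 * τt * t} := by
    intro ω hω
    simp only [hE, Set.mem_compl_iff, Set.mem_setOf_eq, not_le] at hω
    have hSω : S ω = n * mhat ω := by rw [hmhatS ω]; field_simp
    have hc : 1.75 * στ * r = 1.75 * (τt * (t / n)) := by rw [mul_assoc, hστr]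
    have hnt : (n : ℝ) * (t / n) = t := by field_simp
    rw [hc] at hω
    have he : (n : ℝ) * (1.75 * (τt * (t / n))) = 1.75 * τt * t := by
      field_simp
    rcases lt_abs.mp hω with h | h
    · left
      show (n : ℝ) * μτ + 1.75 * τt * t ≤ S ω
      rw [hSω]
      have h6 := mul_lt_mul_of_pos_left h hn
      have h7 : (n : ℝ) * (mhat ω - μτ) = n * mhat ω - n * μτ := by ring
      linarith
    · right
      show S ω ≤ (n : ℝ) * μτ - 1.75 * τt * t
      rw [hSω]
      have h6 := mul_lt_mul_of_pos_left h hn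
      have h7 : (n : ℝ) * -(mhat ω - μτ) = n * μτ - n * mhat ω := by ring
      linarith
  have hμEc : μ Eᶜ ≤ ENNReal.ofReal (2 * Real.exp (-t)) := by
    have hAB : μ Eᶜ ≤ μ {ω | (n : ℝ) * μτ + 1.75 * τt * t ≤ S ω} +
        μ {ω | S ω ≤ (n : ℝ) * μτ - 1.75 * τt * t} :=
      (measure_mono hcompl).trans (measure_union_le _ _)
    have h1 : μ {ω | (n : ℝ) * μτ + 1.75 * τt * t ≤ S ω} ≤ ENNReal.ofReal (Real.exp (-t)) := by
      rw [← ENNReal.ofReal_toReal (measure_ne_top μ _)]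
      exact ENNReal.ofReal_le_ofReal hA
    have h2 : μ {ω | S ω ≤ (n : ℝ) * μτ - 1.75 * τt * t} ≤ ENNReal.ofReal (Real.exp (-t)) := by
      rw [← ENNReal.ofReal_toReal (measure_ne_top μ _)]
      exact ENNReal.ofReal_le_ofReal hB
    refine hAB.trans ((add_le_add h1 h2).trans ?_)
    rw [← ENNReal.ofReal_add (Real.exp_pos _).le (Real.exp_pos _).le]
    exact le_of_eq (by ring_nf)
  -- deterministic bound on the truncated mean bias
  have hX0int : Integrable X0 μ := hL2.integrable one_le_two
  have hX0sqint : Integrable (fun ω => X0 ω ^ 2) μ := hL2.integrable_sq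
  have hminint : Integrable (fun ω => min (X0 ω ^ 2) (τt ^ 2)) μ :=
    ⟨((hX0.pow_const 2).min measurable_const).aestronglyMeasurable,
      HasFiniteIntegral.of_bounded (C := τt ^ 2) (ae_of_all _ fun ω => by
        rw [Real.norm_eq_abs, abs_of_nonneg (le_min (sq_nonneg _) (sq_nonneg _))]
        exact min_le_right _ _)⟩
  have hY0int : Integrable Y0 μ :=
    ⟨hY0m.aestronglyMeasurable, HasFiniteIntegral.of_bounded (C := τt)
      (ae_of_all _ fun ω => by rw [Real.norm_eq_abs]; exact hY0bd ω)⟩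
  have hμτ_abs : |μτ| * τt ≤ σ ^ 2 - στ ^ 2 := by
    have h1 : μτ = ∫ ω, (Y0 ω - X0 ω) ∂μ := by
      rw [integral_sub hY0int hX0int, hmean, sub_zero, hEY0]
    have h2 : |μτ| ≤ ∫ ω, |Y0 ω - X0 ω| ∂μ := by
      rw [h1]
      simpa [Real.norm_eq_abs] using
        norm_integral_le_integral_norm (μ := μ) fun ω => Y0 ω - X0 ω
    have h3 : (∫ ω, |Y0 ω - X0 ω| ∂μ) ≤
        ∫ ω, (X0 ω ^ 2 - min (X0 ω ^ 2) (τt ^ 2)) / τt ∂μ := by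
      refine integral_mono (hY0int.sub hX0int).abs ((hX0sqint.sub hminint).div_const τt)
        fun ω => ?_
      rw [le_div_iff₀ hτpos]
      exact clamp_sub_abs hτpos (X0 ω)
    have h4 : (∫ ω, (X0 ω ^ 2 - min (X0 ω ^ 2) (τt ^ 2)) / τt ∂μ) = (σ ^ 2 - στ ^ 2) / τt := by
      rw [integral_div, integral_sub hX0sqint hminint, ← hσ, hint_min, hστ_sq]
    have h5 : |μτ| ≤ (σ ^ 2 - στ ^ 2) / τt := h2.trans (h3.trans (le_of_eq h4))
    calc |μτ| * τt ≤ (σ ^ 2 - στ ^ 2) / τt * τt :=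
          mul_le_mul_of_nonneg_right h5 hτpos.le
    _ = σ ^ 2 - στ ^ 2 := by field_simp
  have hμτ_bd : |μτ| ≤ (σ ^ 2 / στ - στ) * r := by
    have heq : (σ ^ 2 / στ - στ) * r = (σ ^ 2 - στ ^ 2) / τt := by
      rw [hστ_eq]
      field_simp
    rw [heq, le_div_iff₀ hτpos]
    exact hμτ_abs
  -- E is contained in the target event
  have hincl : E ⊆ {ω | |mhat ω - μτ| ≤ 1.75 * στ * r ∧
      |mhat ω| ≤ (0.75 * στ + σ ^ 2 / στ) * r} := by
    intro ω hω
    rw [hE, Set.mem_setOf_eq] at hω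
    refine ⟨hω, ?_⟩
    have h5 : |mhat ω| ≤ |mhat ω - μτ| + |μτ| := by
      calc |mhat ω| = |mhat ω - μτ + μτ| := by ring_nf
      _ ≤ |mhat ω - μτ| + |μτ| := abs_add_le _ _
    calc |mhat ω| ≤ 1.75 * στ * r + (σ ^ 2 / στ - στ) * r := by linarith
    _ = (0.75 * στ + σ ^ 2 / στ) * r := by ring
  -- final ENNReal computation
  refine le_trans ?_ (measure_mono hincl)
  have hμE : μ E = 1 - μ Eᶜ := by
    have h := prob_compl_eq_one_sub (μ := μ) hEmeas.compl
    rwa [compl_compl] at h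
  rw [hμE]
  calc ENNReal.ofReal (1 - 2 * Real.exp (-t)) = 1 - ENNReal.ofReal (2 * Real.exp (-t)) := by
        rw [ENNReal.ofReal_sub _ (by positivity), ENNReal.ofReal_one]
  _ ≤ 1 - μ Eᶜ := tsub_le_tsub_left hμEc 1
end

section
/- Existence, uniqueness and bounds for the population tuning scale: let X be a real random variable with Var(X) < ∞ and set σ² = Var(X) (with E(X) = 0, so σ² = E(X²)). If 0 < t < n·P(|X| > 0), then the equation E[min(X², τ²)]/τ² = t/n has a unique solution τ_t in τ > 0, and it satisfies { E[min(X², q_{t/n}²)] }^{1/2}·√(n/t) ≤ τ_t ≤ σ·√(n/t), where q_α := inf{ z : P(|X| > z) ≤ α } is the upper α-quantile of |X|. -/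
open MeasureTheory Filter Set Topology

section Helpers

lemma min_div_le_min_div {a b x : ℝ} (ha : 0 < a) (hab : a ≤ b) (hx : 0 ≤ x) :
    min x (b ^ 2) / b ^ 2 ≤ min x (a ^ 2) / a ^ 2 := by
  have hb : 0 < b := lt_of_lt_of_le ha hab
  have ha2 : (0:ℝ) < a ^ 2 := by positivity
  have hb2 : (0:ℝ) < b ^ 2 := by positivity
  have hab2 : a ^ 2 ≤ b ^ 2 := by nlinarith
  rcases le_or_gt (a ^ 2) x with h | h
  · rw [min_eq_right h, div_self (ne_of_gt ha2)]
    exact div_le_one_of_le₀ (min_le_right _ _) hb2.le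
  · rw [min_eq_left h.le, min_eq_left (h.le.trans hab2)]
    gcongr

lemma min_div_lt_min_div {a b x : ℝ} (ha : 0 < a) (hab : a < b) (hx : 0 < x)
    (hxb : x < b ^ 2) :
    min x (b ^ 2) / b ^ 2 < min x (a ^ 2) / a ^ 2 := by
  have hb : 0 < b := ha.trans hab
  have ha2 : (0:ℝ) < a ^ 2 := by positivity
  have hb2 : (0:ℝ) < b ^ 2 := by positivity
  have hab2 : a ^ 2 < b ^ 2 := by nlinarith
  rcases le_or_gt (a ^ 2) x with h | h
  · rw [min_eq_right h, div_self (ne_of_gt ha2), min_eq_left hxb.le]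
    exact (div_lt_one hb2).2 hxb
  · rw [min_eq_left h.le, min_eq_left (h.trans hab2).le]
    gcongr

variable {Ω : Type*} [MeasurableSpace Ω] {μ : Measure Ω} [IsProbabilityMeasure μ]
variable {X : Ω → ℝ}

lemma int_min (hX : Measurable X) (τ : ℝ) :
    Integrable (fun ω => min (X ω ^ 2) (τ ^ 2)) μ := by
  refine Integrable.mono' (integrable_const (τ ^ 2)) ?_ ?_
  · exact ((hX.pow_const 2).min measurable_const).aestronglyMeasurable
  · filter_upwards with ω
    have h1 : 0 ≤ min (X ω ^ 2) (τ ^ 2) := le_min (by positivity) (by positivity)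
    rw [Real.norm_eq_abs, abs_of_nonneg h1]
    exact min_le_right _ _

lemma indic_bound (hX : Measurable X) {τ : ℝ} (A : Set Ω) (hA : MeasurableSet A)
    (hsub : ∀ ω ∈ A, τ ^ 2 ≤ X ω ^ 2) :
    (μ A).toReal * τ ^ 2 ≤ ∫ ω, min (X ω ^ 2) (τ ^ 2) ∂μ := by
  have h1 : ∫ ω, A.indicator (fun _ => τ ^ 2) ω ∂μ = (μ A).toReal * τ ^ 2 := by
    rw [integral_indicator_const _ hA]; simp [mul_comm, Measure.real]
  rw [← h1]
  refine integral_mono ((integrable_const _).indicator hA) (int_min hX τ) ?_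
  intro ω
  by_cases h : ω ∈ A
  · simp [Set.indicator_of_mem h, le_min (hsub ω h) (le_refl _)]
  · simp only [Set.indicator_of_notMem h]
    exact le_min (by positivity) (by positivity)

lemma cont_int (hX : Measurable X) :
    Continuous (fun τ : ℝ => ∫ ω, min (X ω ^ 2) (τ ^ 2) ∂μ) := by
  rw [continuous_iff_continuousAt]
  intro τ₀
  refine continuousAt_of_dominated (F := fun τ ω => min (X ω ^ 2) (τ ^ 2))
    (bound := fun _ => (|τ₀| + 1) ^ 2) ?_ ?_ (integrable_const _) ?_
  · filter_upwards with τ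
    exact ((hX.pow_const 2).min measurable_const).aestronglyMeasurable
  · have : ∀ᶠ τ in nhds τ₀, |τ| ≤ |τ₀| + 1 := by
      have : ∀ᶠ τ in nhds τ₀, dist τ τ₀ < 1 :=
        Metric.eventually_nhds_iff.2 ⟨1, one_pos, fun {y} h => h⟩
      filter_upwards [this] with τ h
      rw [Real.dist_eq] at h
      calc |τ| ≤ |τ₀| + |τ - τ₀| := by
              have := abs_sub_abs_le_abs_sub τ τ₀; linarith
        _ ≤ |τ₀| + 1 := by linarith
    filter_upwards [this] with τ h
    filter_upwards with ω
    have h1 : 0 ≤ min (X ω ^ 2) (τ ^ 2) := le_min (by positivity) (by positivity)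
    rw [Real.norm_eq_abs, abs_of_nonneg h1]
    have : τ ^ 2 ≤ (|τ₀| + 1) ^ 2 := by
      have h0 : (0:ℝ) ≤ |τ₀| := abs_nonneg _
      nlinarith [abs_nonneg τ, sq_abs τ, sq_abs τ₀]
    exact (min_le_right _ _).trans this
  · filter_upwards with ω
    exact (continuous_const.min ((continuous_pow 2).comp continuous_id)).continuousAt

lemma exists_tail {r : ℝ} (hr : r < (μ {ω | 0 < |X ω|}).toReal) :
    ∃ c : ℝ, 0 < c ∧ r < (μ {ω | c ≤ |X ω|}).toReal := by
  set s : ℕ → Set Ω := fun k => {ω | 1 / (k + 1 : ℝ) ≤ |X ω|} with hs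
  have hmono : Monotone s := by
    intro k l hkl ω hω
    have hkl' : (k + 1 : ℝ) ≤ (l + 1 : ℝ) := by exact_mod_cast Nat.succ_le_succ hkl
    have h' : 1 / (l + 1 : ℝ) ≤ 1 / (k + 1 : ℝ) := by gcongr
    exact h'.trans hω
  have hU : ⋃ k, s k = {ω | 0 < |X ω|} := by
    ext ω
    simp only [mem_iUnion, hs, mem_setOf_eq]
    constructor
    · rintro ⟨k, hk⟩
      have : (0:ℝ) < 1 / (k + 1 : ℝ) := by positivity
      linarith
    · intro h
      obtain ⟨k, hk⟩ := exists_nat_one_div_lt h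
      exact ⟨k, hk.le⟩
  have h1 : Tendsto (fun k => μ (s k)) atTop (𝓝 (μ {ω | 0 < |X ω|})) := by
    rw [← hU]
    exact tendsto_measure_iUnion_atTop hmono
  have h2 : Tendsto (fun k => (μ (s k)).toReal) atTop
      (𝓝 ((μ {ω | 0 < |X ω|}).toReal)) :=
    (ENNReal.tendsto_toReal (measure_ne_top μ _)).comp h1
  obtain ⟨k, hk⟩ := (h2.eventually (eventually_gt_nhds hr)).exists
  exact ⟨1 / (k + 1 : ℝ), by positivity, hk⟩

end Helpers

set_option maxHeartbeats 1000000 in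
/-- **Proposition A.2(i) (Chen–Zhou 2019): existence, uniqueness and bounds for the
population tuning scale.**  Let `X` be a real random variable with finite variance,
`E X = 0` and `σ² = E X²`.  If `0 < t < n · P(|X| > 0)`, then the equation
`E[min(X², τ²)]/τ² = t/n` has a unique solution `τ_t > 0`, and it satisfies
`(E[min(X², q_{t/n}²)])^{1/2} √(n/t) ≤ τ_t ≤ σ √(n/t)`, where
`q_α = inf{z : P(|X| > z) ≤ α}` is the upper `α`-quantile of `|X|`. -/
theorem population_tuning_scale_existsUnique_and_bounds
    {Ω : Type*} [MeasurableSpace Ω] (μ : Measure Ω) [IsProbabilityMeasure μ]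
    (X : Ω → ℝ) (hX : Measurable X) (hL2 : MemLp X 2 μ)
    (hmean : ∫ ω, X ω ∂μ = 0)
    (σ : ℝ) (hσ0 : 0 ≤ σ) (hσ : σ ^ 2 = ∫ ω, X ω ^ 2 ∂μ)
    (n : ℕ) (t : ℝ) (ht0 : 0 < t)
    (ht : t < (n : ℝ) * (μ {ω | 0 < |X ω|}).toReal) :
    (∃! τ : ℝ, 0 < τ ∧ (∫ ω, min (X ω ^ 2) (τ ^ 2) ∂μ) / τ ^ 2 = t / n) ∧
    ∀ τ : ℝ, 0 < τ → (∫ ω, min (X ω ^ 2) (τ ^ 2) ∂μ) / τ ^ 2 = t / n →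
      Real.sqrt (∫ ω, min (X ω ^ 2)
            ((sInf {z : ℝ | (μ {ω | z < |X ω|}).toReal ≤ t / n}) ^ 2) ∂μ)
          * Real.sqrt ((n : ℝ) / t) ≤ τ
        ∧ τ ≤ σ * Real.sqrt ((n : ℝ) / t) := by
  classical
  set S : Set Ω := {ω | 0 < |X ω|} with hSdef
  have hSmeas : MeasurableSet S := measurableSet_lt measurable_const hX.abs
  have hn : (0:ℝ) < (n : ℝ) := by
    by_contra h
    push_neg at h
    have : (n:ℝ) * (μ S).toReal ≤ 0 :=
      mul_nonpos_of_nonpos_of_nonneg h ENNReal.toReal_nonneg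
    linarith
  have hmS1 : (μ S).toReal ≤ 1 := by
    have := prob_le_one (μ := μ) (s := S)
    exact ENNReal.toReal_le_of_le_ofReal one_pos.le (by simpa using this)
  have htn : t / n < (μ S).toReal := (div_lt_iff₀ hn).2 (by linarith [ht])
  have htn0 : 0 < t / n := div_pos ht0 hn
  have htn1 : t / n < 1 := lt_of_lt_of_le htn hmS1
  have hXsq : Integrable (fun ω => X ω ^ 2) μ := hL2.integrable_sq
  have hfle : ∀ τ : ℝ, (∫ ω, min (X ω ^ 2) (τ ^ 2) ∂μ) ≤ σ ^ 2 := fun τ => by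
    rw [hσ]
    exact integral_mono (int_min hX τ) hXsq fun ω => min_le_left _ _
  -- lower bound of g by tail measure
  have hglow : ∀ τ : ℝ, 0 < τ →
      (μ {ω | τ < |X ω|}).toReal ≤ (∫ ω, min (X ω ^ 2) (τ ^ 2) ∂μ) / τ ^ 2 := by
    intro τ hτ
    have hA : MeasurableSet {ω | τ < |X ω|} := measurableSet_lt measurable_const hX.abs
    have hb := indic_bound (μ := μ) hX (τ := τ) _ hA (fun ω hω => by
      have h1 : τ ≤ |X ω| := le_of_lt hω
      nlinarith [sq_abs (X ω)])
    rw [le_div_iff₀ (by positivity)]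
    exact hb
  have hprod : (t / (n:ℝ)) * ((n:ℝ) / t) = 1 := by field_simp
  -- uniqueness key
  have key : ∀ a b : ℝ, 0 < a → a < b →
      (∫ ω, min (X ω ^ 2) (a ^ 2) ∂μ) / a ^ 2 = t / n →
      (∫ ω, min (X ω ^ 2) (b ^ 2) ∂μ) / b ^ 2 = t / n → False := by
    intro a b ha hab hga hgb
    have hb : 0 < b := ha.trans hab
    set D : Ω → ℝ :=
      fun ω => min (X ω ^ 2) (a ^ 2) / a ^ 2 - min (X ω ^ 2) (b ^ 2) / b ^ 2 with hD
    have hia : Integrable (fun ω => min (X ω ^ 2) (a ^ 2) / a ^ 2) μ :=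
      (int_min hX a).div_const _
    have hib : Integrable (fun ω => min (X ω ^ 2) (b ^ 2) / b ^ 2) μ :=
      (int_min hX b).div_const _
    have hDint : Integrable D μ := hia.sub hib
    have hDnn : ∀ ω, 0 ≤ D ω := fun ω =>
      sub_nonneg.2 (min_div_le_min_div ha hab.le (sq_nonneg _))
    have hDzero : ∫ ω, D ω ∂μ = 0 := by
      rw [integral_sub hia hib, integral_div, integral_div, hga, hgb, sub_self]
    have hae : D =ᵐ[μ] 0 :=
      (integral_eq_zero_iff_of_nonneg hDnn hDint).1 hDzero
    have hae2 : ∀ᵐ ω ∂μ, min (X ω ^ 2) (a ^ 2) = S.indicator (fun _ => a ^ 2) ω := by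
      filter_upwards [hae] with ω hω
      simp only [Pi.zero_apply, hD] at hω
      by_cases hx : X ω = 0
      · have hωS : ω ∉ S := by simp [hSdef, hx]
        simp [hx, Set.indicator_of_notMem hωS, min_eq_left (sq_nonneg a)]
      · have hxx : 0 < X ω ^ 2 := by positivity
        have hωS : ω ∈ S := by simp [hSdef, abs_pos, hx]
        by_cases hb2 : X ω ^ 2 < b ^ 2
        · exact absurd hω (ne_of_gt (sub_pos.2 (min_div_lt_min_div ha hab hxx hb2)))
        · push_neg at hb2
          have hab2 : a ^ 2 ≤ b ^ 2 := by nlinarith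
          rw [min_eq_right (hab2.trans hb2), Set.indicator_of_mem hωS]
    have hcalc : (∫ ω, min (X ω ^ 2) (a ^ 2) ∂μ) = (μ S).toReal * a ^ 2 := by
      rw [integral_congr_ae hae2, integral_indicator_const _ hSmeas]
      simp [mul_comm, Measure.real]
    rw [hcalc] at hga
    rw [mul_div_assoc, div_self (by positivity : (a:ℝ) ^ 2 ≠ 0), mul_one] at hga
    exact absurd hga.symm (ne_of_lt htn)
  -- existence
  obtain ⟨c, hc0, hc⟩ := exists_tail (μ := μ) (X := X) htn
  set q2 : ℝ := σ * Real.sqrt ((n:ℝ)/t) + 1 with hq2def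
  have hsq : Real.sqrt ((n:ℝ)/t) ^ 2 = (n:ℝ)/t := Real.sq_sqrt (by positivity)
  have hq2pos : 0 < q2 := by positivity
  have hσq2 : σ ^ 2 * ((n:ℝ)/t) < q2 ^ 2 := by
    nlinarith [Real.sqrt_nonneg ((n:ℝ)/t), hσ0]
  have hg2 : (∫ ω, min (X ω ^ 2) (q2 ^ 2) ∂μ) / q2 ^ 2 < t / n := by
    rw [div_lt_iff₀ (by positivity)]
    have h1 := hfle q2
    nlinarith [mul_lt_mul_of_pos_right hσq2 htn0]
  set q1 : ℝ := min c (q2 / 2) with hq1def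
  have hq1pos : 0 < q1 := lt_min hc0 (by positivity)
  have hq1lt : q1 < q2 := lt_of_le_of_lt (min_le_right _ _) (half_lt_self hq2pos)
  have hg1 : t / n < (∫ ω, min (X ω ^ 2) (q1 ^ 2) ∂μ) / q1 ^ 2 := by
    have hA : MeasurableSet {ω | c ≤ |X ω|} := measurableSet_le measurable_const hX.abs
    have hb := indic_bound (μ := μ) hX (τ := q1) _ hA (fun ω hω => by
      have h1 : q1 ≤ |X ω| := (min_le_left _ _).trans hω
      nlinarith [sq_abs (X ω)])
    have h2 : (μ {ω | c ≤ |X ω|}).toReal ≤ (∫ ω, min (X ω ^ 2) (q1 ^ 2) ∂μ) / q1 ^ 2 := by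
      rw [le_div_iff₀ (by positivity)]
      exact hb
    exact lt_of_lt_of_le hc h2
  have hgcont : ContinuousOn
      (fun τ : ℝ => (∫ ω, min (X ω ^ 2) (τ ^ 2) ∂μ) / τ ^ 2) (Icc q1 q2) := by
    refine ContinuousOn.div (cont_int hX).continuousOn (continuous_pow 2).continuousOn ?_
    intro τ hτ
    exact pow_ne_zero 2 (ne_of_gt (lt_of_lt_of_le hq1pos hτ.1))
  obtain ⟨τ₀, hτ₀mem, hτ₀eq⟩ :=
    intermediate_value_Icc' hq1lt.le hgcont ⟨hg2.le, hg1.le⟩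
  have hτ₀pos : 0 < τ₀ := lt_of_lt_of_le hq1pos hτ₀mem.1
  constructor
  · refine ⟨τ₀, ⟨hτ₀pos, hτ₀eq⟩, ?_⟩
    rintro y ⟨hy0, hyeq⟩
    rcases lt_trichotomy y τ₀ with h | h | h
    · exact absurd (key y τ₀ hy0 h hyeq hτ₀eq) (by simp)
    · exact h
    · exact absurd (key τ₀ y hτ₀pos h hτ₀eq hyeq) (by simp)
  · intro τ hτpos hτeq
    have hfeq : (∫ ω, min (X ω ^ 2) (τ ^ 2) ∂μ) = t / n * τ ^ 2 :=
      (div_eq_iff (by positivity : (τ:ℝ) ^ 2 ≠ 0)).1 hτeq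
    constructor
    · -- lower bound
      set Sq : Set ℝ := {z : ℝ | (μ {ω | z < |X ω|}).toReal ≤ t / n} with hSq
      have hzpos : ∀ z ∈ Sq, (0:ℝ) ≤ z := by
        intro z hz
        by_contra hzneg
        push_neg at hzneg
        have huniv : {ω | z < |X ω|} = Set.univ := by
          ext ω; simp only [mem_setOf_eq, mem_univ, iff_true]
          exact lt_of_lt_of_le hzneg (abs_nonneg _)
        rw [hSq] at hz
        simp only [mem_setOf_eq, huniv] at hz
        simp [measure_univ] at hz
        linarith
      have hτSq : τ ∈ Sq := by
        have := hglow τ hτpos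
        rw [hτeq] at this
        exact this
      have hq0 : 0 ≤ sInf Sq := le_csInf ⟨τ, hτSq⟩ hzpos
      have hqτ : sInf Sq ≤ τ := csInf_le ⟨0, hzpos⟩ hτSq
      have hq2τ2 : (sInf Sq) ^ 2 ≤ τ ^ 2 := by nlinarith
      have hle : (∫ ω, min (X ω ^ 2) ((sInf Sq) ^ 2) ∂μ) ≤
          ∫ ω, min (X ω ^ 2) (τ ^ 2) ∂μ :=
        integral_mono (int_min hX _) (int_min hX _)
          (fun ω => min_le_min (le_refl _) hq2τ2)
      have h1 : Real.sqrt (∫ ω, min (X ω ^ 2) ((sInf Sq) ^ 2) ∂μ) ≤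
          Real.sqrt (t / n) * τ := by
        have h2 : Real.sqrt (t / n * τ ^ 2) = Real.sqrt (t / n) * τ := by
          rw [Real.sqrt_mul htn0.le, Real.sqrt_sq hτpos.le]
        rw [← h2]
        exact Real.sqrt_le_sqrt (by rw [← hfeq]; exact hle)
      calc Real.sqrt (∫ ω, min (X ω ^ 2) ((sInf Sq) ^ 2) ∂μ) * Real.sqrt ((n:ℝ)/t)
          ≤ Real.sqrt (t / n) * τ * Real.sqrt ((n:ℝ)/t) := by
            exact mul_le_mul_of_nonneg_right h1 (Real.sqrt_nonneg _)
        _ = τ * (Real.sqrt (t / n) * Real.sqrt ((n:ℝ)/t)) := by ring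
        _ = τ := by
            rw [← Real.sqrt_mul htn0.le, hprod, Real.sqrt_one, mul_one]
    · -- upper bound
      have h1 : t / n * τ ^ 2 ≤ σ ^ 2 := by rw [← hfeq]; exact hfle τ
      have h2 : τ ^ 2 ≤ σ ^ 2 * ((n:ℝ)/t) := by
        nlinarith [mul_le_mul_of_nonneg_right h1 (le_of_lt (div_pos hn ht0))]
      calc τ = Real.sqrt (τ ^ 2) := (Real.sqrt_sq hτpos.le).symm
        _ ≤ Real.sqrt (σ ^ 2 * ((n:ℝ)/t)) := Real.sqrt_le_sqrt h2
        _ = σ * Real.sqrt ((n:ℝ)/t) := by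
            rw [Real.sqrt_mul (sq_nonneg σ), Real.sqrt_sq hσ0]
end

section
/- Asymptotics of the population tuning scale: let X be a real random variable with E(X) = 0 and 0 < σ² = E(X²) < ∞. Let t = tₙ > 0 satisfy tₙ → ∞ and tₙ = o(n) as n → ∞, and for each n let τ_t be the unique positive solution of E[min(X², τ²)]/τ² = t/n. Then τ_t → ∞, σ_{τ_t} → σ, and τ_t ~ σ·√(n/t) (i.e. τ_t/(σ√(n/t)) → 1) as n → ∞, where σ_τ² = E[min(X², τ²)]. -/
open MeasureTheory Filter

/-- **Proposition A.2(ii) (Chen–Zhou 2019): asymptotics of the population tuning scale.**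
Let `X` satisfy `E X = 0` and `0 < σ² = E X² < ∞`.  If `t = tₙ → ∞` with `tₙ = o(n)`, and
`τₙ` is the (eventually unique) positive solution of `E[min(X², τ²)]/τ² = tₙ/n`, then
`τₙ → ∞`, `σ_{τₙ} → σ` and `τₙ ∼ σ √(n/tₙ)` as `n → ∞`, where
`σ_τ² = E[min(X², τ²)]`. -/
theorem population_tuning_scale_asymptotics
    {Ω : Type*} [MeasurableSpace Ω] (μ : Measure Ω) [IsProbabilityMeasure μ]
    (X : Ω → ℝ) (hX : Measurable X) (hL2 : MemLp X 2 μ)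
    (hmean : ∫ ω, X ω ∂μ = 0)
    (σ : ℝ) (hσpos : 0 < σ) (hσ : σ ^ 2 = ∫ ω, X ω ^ 2 ∂μ)
    (t : ℕ → ℝ) (ht0 : ∀ n, 0 < t n)
    (htinf : Tendsto t atTop atTop)
    (hto : Tendsto (fun n => t n / (n : ℝ)) atTop (nhds 0))
    (τ : ℕ → ℝ)
    (hτ : ∀ᶠ n in atTop, 0 < τ n ∧
      (∫ ω, min (X ω ^ 2) (τ n ^ 2) ∂μ) / τ n ^ 2 = t n / n) :
    Tendsto τ atTop atTop ∧
    Tendsto (fun n => Real.sqrt (∫ ω, min (X ω ^ 2) (τ n ^ 2) ∂μ)) atTop (nhds σ) ∧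
    Tendsto (fun n => τ n / (σ * Real.sqrt ((n : ℝ) / t n))) atTop (nhds 1) := by
  have hX2 : Integrable (fun ω => X ω ^ 2) μ := hL2.integrable_sq
  have g : ℝ → ℝ := fun s => ∫ ω, min (X ω ^ 2) (s ^ 2) ∂μ
  -- integrability of truncated second moments
  have hmeas : ∀ s : ℝ, AEStronglyMeasurable (fun ω => min (X ω ^ 2) (s ^ 2)) μ :=
    fun s => ((hX.pow_const 2).min measurable_const).aestronglyMeasurable
  have hgint : ∀ s : ℝ, Integrable (fun ω => min (X ω ^ 2) (s ^ 2)) μ := by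
    intro s
    refine hX2.mono (hmeas s) ?_
    filter_upwards with ω
    rw [Real.norm_eq_abs, Real.norm_eq_abs,
      abs_of_nonneg (le_min (sq_nonneg _) (sq_nonneg _)), abs_of_nonneg (sq_nonneg _)]
    exact min_le_left _ _
  -- positivity of truncated second moments
  have hgpos : ∀ s : ℝ, 0 < s → 0 < ∫ ω, min (X ω ^ 2) (s ^ 2) ∂μ := by
    intro s hs
    rcases lt_or_ge 0 (∫ ω, min (X ω ^ 2) (s ^ 2) ∂μ) with h | h
    · exact h
    have hnn : 0 ≤ ∫ ω, min (X ω ^ 2) (s ^ 2) ∂μ :=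
      integral_nonneg fun ω => le_min (sq_nonneg _) (sq_nonneg _)
    have h0 : ∫ ω, min (X ω ^ 2) (s ^ 2) ∂μ = 0 := le_antisymm h hnn
    have hae : (fun ω => min (X ω ^ 2) (s ^ 2)) =ᵐ[μ] 0 := by
      rw [← integral_eq_zero_iff_of_nonneg
        (fun ω => le_min (sq_nonneg _) (sq_nonneg _)) (hgint s)]
      exact h0
    have hae2 : (fun ω => X ω ^ 2) =ᵐ[μ] 0 := by
      filter_upwards [hae] with ω hω
      by_contra hne
      have hpos : 0 < X ω ^ 2 := lt_of_le_of_ne (sq_nonneg _) (Ne.symm hne)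
      have : 0 < min (X ω ^ 2) (s ^ 2) := lt_min hpos (pow_pos hs 2)
      simp only [Pi.zero_apply] at hω
      linarith
    have : σ ^ 2 = 0 := by
      rw [hσ, integral_congr_ae hae2]
      simp
    nlinarith [sq_nonneg σ]
  -- monotonicity of s ↦ g s / s²
  have hmono : ∀ a b : ℝ, 0 < a → a ≤ b →
      (∫ ω, min (X ω ^ 2) (b ^ 2) ∂μ) * a ^ 2 ≤ (∫ ω, min (X ω ^ 2) (a ^ 2) ∂μ) * b ^ 2 := by
    intro a b ha hab
    rw [← integral_mul_const, ← integral_mul_const]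
    refine integral_mono ((hgint b).mul_const _) ((hgint a).mul_const _) fun ω => ?_
    have hab2 : a ^ 2 ≤ b ^ 2 := by nlinarith
    rcases le_total (X ω ^ 2) (a ^ 2) with h | h
    · rw [min_eq_left h, min_eq_left (h.trans hab2)]
      nlinarith [sq_nonneg (X ω)]
    · rw [min_eq_right h]
      calc min (X ω ^ 2) (b ^ 2) * a ^ 2 ≤ b ^ 2 * a ^ 2 := by
            have := min_le_right (X ω ^ 2) (b ^ 2)
            nlinarith [sq_nonneg a]
        _ = a ^ 2 * b ^ 2 := by ring
  -- convergence of g at infinity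
  have hglim : Tendsto (fun s : ℝ => ∫ ω, min (X ω ^ 2) (s ^ 2) ∂μ) atTop (nhds (σ ^ 2)) := by
    rw [hσ]
    refine tendsto_integral_filter_of_dominated_convergence (fun ω => X ω ^ 2)
      (Eventually.of_forall hmeas) ?_ hX2 ?_
    · filter_upwards with s
      filter_upwards with ω
      rw [Real.norm_eq_abs, abs_of_nonneg (le_min (sq_nonneg _) (sq_nonneg _))]
      exact min_le_left _ _
    · filter_upwards with ω
      refine tendsto_const_nhds.congr' ?_
      filter_upwards [eventually_ge_atTop |X ω|] with s hs
      have : X ω ^ 2 ≤ s ^ 2 := by nlinarith [abs_nonneg (X ω), sq_abs (X ω)]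
      exact (min_eq_left this).symm
  -- Step 1: τ → ∞
  have hτtop : Tendsto τ atTop atTop := by
    rw [tendsto_atTop]
    intro M
    set M' := max M 1 with hM'def
    have hM' : (0:ℝ) < M' := lt_of_lt_of_le one_pos (le_max_right _ _)
    have hgM' := hgpos M' hM'
    have h1 : ∀ᶠ n in atTop, t n / (n:ℝ) < (∫ ω, min (X ω ^ 2) (M' ^ 2) ∂μ) / M' ^ 2 :=
      hto.eventually (gt_mem_nhds (div_pos hgM' (pow_pos hM' 2)))
    filter_upwards [h1, hτ] with n hn hτn
    obtain ⟨hτpos, heq⟩ := hτn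
    by_contra hlt
    push_neg at hlt
    have hτM' : τ n ≤ M' := le_trans hlt.le (le_max_left _ _)
    have h2 := hmono (τ n) M' hτpos hτM'
    have h3 : (∫ ω, min (X ω ^ 2) (M' ^ 2) ∂μ) / M' ^ 2 ≤
        (∫ ω, min (X ω ^ 2) (τ n ^ 2) ∂μ) / τ n ^ 2 := by
      rw [div_le_div_iff₀ (pow_pos hM' 2) (pow_pos hτpos 2)]
      linarith
    rw [heq] at h3
    linarith
  -- Step 2: σ_{τₙ} → σ
  have hgτ : Tendsto (fun n => ∫ ω, min (X ω ^ 2) (τ n ^ 2) ∂μ) atTop (nhds (σ ^ 2)) :=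
    hglim.comp hτtop
  have hsqrt : Tendsto (fun n => Real.sqrt (∫ ω, min (X ω ^ 2) (τ n ^ 2) ∂μ)) atTop (nhds σ) := by
    have := (Real.continuous_sqrt.tendsto (σ ^ 2)).comp hgτ
    rwa [Real.sqrt_sq hσpos.le] at this
  -- Step 3: the ratio
  refine ⟨hτtop, hsqrt, ?_⟩
  have hratio : ∀ᶠ n in atTop,
      Real.sqrt (∫ ω, min (X ω ^ 2) (τ n ^ 2) ∂μ) / σ
        = τ n / (σ * Real.sqrt ((n : ℝ) / t n)) := by
    filter_upwards [hτ, eventually_ge_atTop 1] with n hτn hn1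
    obtain ⟨hτpos, heq⟩ := hτn
    have hn0 : (0:ℝ) < n := by exact_mod_cast Nat.lt_of_lt_of_le Nat.zero_lt_one hn1
    have htn := ht0 n
    have hq : 0 < t n / (n:ℝ) := div_pos htn hn0
    have hgval : ∫ ω, min (X ω ^ 2) (τ n ^ 2) ∂μ = (t n / n) * τ n ^ 2 := by
      rw [div_eq_iff (pow_pos hτpos 2).ne'] at heq
      rw [heq]
    have hs1 : Real.sqrt (∫ ω, min (X ω ^ 2) (τ n ^ 2) ∂μ)
        = Real.sqrt (t n / n) * τ n := by
      rw [hgval, Real.sqrt_mul hq.le, Real.sqrt_sq hτpos.le]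
    have hs2 : Real.sqrt ((n:ℝ) / t n) = (Real.sqrt (t n / n))⁻¹ := by
      rw [← Real.sqrt_inv]
      congr 1
      field_simp
    have hsq : 0 < Real.sqrt (t n / n) := Real.sqrt_pos.mpr hq
    rw [hs1, hs2]
    field_simp
  have hfin : Tendsto (fun n => Real.sqrt (∫ ω, min (X ω ^ 2) (τ n ^ 2) ∂μ) / σ)
      atTop (nhds 1) := by
    have := hsqrt.div_const σ
    rwa [div_self hσpos.ne'] at this
  exact hfin.congr' hratio
end

section
/- Existence and uniqueness of the empirical tuning scale: let x₁,…,xₙ be real numbers and let 0 < t < Σ_{i=1}^n 1{|x_i| > 0}. Then the equation (1/n) Σ_{i=1}^n min(x_i², τ²)/τ² = t/n has a unique solution in τ > 0. -/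
open Finset

/-- **Proposition A.3 (Chen–Zhou 2019): existence and uniqueness of the empirical tuning
scale.**  For real numbers `x₁, …, xₙ` and `0 < t < #{i : |xᵢ| > 0}`, the equation
`(1/n) ∑ᵢ min(xᵢ², τ²)/τ² = t/n` has a unique solution in `τ > 0`. -/
theorem empirical_tuning_scale_existsUnique
    (n : ℕ) (x : Fin n → ℝ) (t : ℝ) (ht0 : 0 < t)
    (ht : t < ((Finset.univ.filter fun i => 0 < |x i|).card : ℝ)) :
    ∃! τ : ℝ, 0 < τ ∧
      (1 / (n : ℝ)) * ∑ i, min (x i ^ 2) (τ ^ 2) / τ ^ 2 = t / n := by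
  classical
  set S : Finset (Fin n) := Finset.univ.filter fun i => 0 < |x i| with hSdef
  have hSne : S.Nonempty := by
    rcases Finset.eq_empty_or_nonempty S with h | h
    · rw [h] at ht; simp at ht; linarith
    · exact h
  obtain ⟨i0, hi0⟩ := hSne
  have hnpos : 0 < n := i0.pos
  have hn : (0:ℝ) < n := by exact_mod_cast hnpos
  set g : ℝ → ℝ := fun τ => ∑ i, min (x i ^ 2) (τ ^ 2) / τ ^ 2 with hgdef
  have hequiv : ∀ τ : ℝ, ((1 / (n : ℝ)) * g τ = t / n ↔ g τ = t) := by
    intro τ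
    rw [show t / (n:ℝ) = (1 / (n:ℝ)) * t by ring]
    exact mul_right_inj' (by positivity)
  -- antitone term lemma
  have term_le : ∀ (c τ₁ τ₂ : ℝ), 0 ≤ c → 0 < τ₁ → τ₁ ≤ τ₂ →
      min c (τ₂ ^ 2) / τ₂ ^ 2 ≤ min c (τ₁ ^ 2) / τ₁ ^ 2 := by
    intro c τ₁ τ₂ hc h1 h12
    have h2 : (0:ℝ) < τ₂ := lt_of_lt_of_le h1 h12
    have hsq1 : (0:ℝ) < τ₁ ^ 2 := by positivity
    have hsq2 : (0:ℝ) < τ₂ ^ 2 := by positivity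
    have hsq12 : τ₁ ^ 2 ≤ τ₂ ^ 2 := by nlinarith
    rw [div_le_div_iff₀ hsq2 hsq1]
    rcases le_total c (τ₁ ^ 2) with hc1 | hc1
    · rw [min_eq_left hc1, min_eq_left (hc1.trans hsq12)]
      nlinarith
    · rw [min_eq_right hc1]
      nlinarith [min_le_right c (τ₂ ^ 2)]
  -- key decrease lemma
  have key : ∀ τ₁ τ₂ : ℝ, 0 < τ₁ → τ₁ < τ₂ → g τ₁ = t → g τ₂ < t := by
    intro τ₁ τ₂ h1 h12 hgt
    have hsq1 : (0:ℝ) < τ₁ ^ 2 := pow_pos h1 2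
    have hsq2 : (0:ℝ) < τ₂ ^ 2 := pow_pos (h1.trans h12) 2
    have hex : ∃ i, 0 < |x i| ∧ x i ^ 2 < τ₁ ^ 2 := by
      by_contra h
      push_neg at h
      have hcard : g τ₁ = (S.card : ℝ) := by
        have hterm : ∀ i, min (x i ^ 2) (τ₁ ^ 2) / τ₁ ^ 2
            = (if i ∈ S then (1:ℝ) else 0) := by
          intro i
          by_cases hi : i ∈ S
          · have hxi : 0 < |x i| := (Finset.mem_filter.mp hi).2
            have := h i hxi
            rw [min_eq_right this, div_self hsq1.ne', if_pos hi]
          · have hxi : ¬ 0 < |x i| := fun hx => hi (Finset.mem_filter.mpr ⟨Finset.mem_univ i, hx⟩)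
            have hx0 : x i = 0 := abs_eq_zero.mp (le_antisymm (not_lt.mp hxi) (abs_nonneg _))
            rw [hx0, if_neg hi]
            norm_num [min_eq_left (sq_nonneg τ₁)]
        rw [hgdef]
        simp only [hterm]
        rw [Finset.sum_ite_mem, Finset.univ_inter, Finset.sum_const, nsmul_eq_mul, mul_one]
      rw [hgt] at hcard
      rw [hcard] at ht
      exact lt_irrefl _ (by exact_mod_cast ht)
    obtain ⟨j, hj1, hj2⟩ := hex
    have hlt : g τ₂ < g τ₁ := by
      apply Finset.sum_lt_sum
      · intro i _
        exact term_le _ _ _ (sq_nonneg _) h1 h12.le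
      · refine ⟨j, Finset.mem_univ j, ?_⟩
        have hc : 0 < x j ^ 2 := sq_abs (x j) ▸ pow_pos hj1 2
        have hsq12 : τ₁ ^ 2 < τ₂ ^ 2 := by nlinarith
        have hjle2 : x j ^ 2 ≤ τ₂ ^ 2 := le_of_lt (hj2.trans hsq12)
        rw [min_eq_left hjle2, min_eq_left hj2.le]
        exact div_lt_div_of_pos_left hc hsq1 hsq12
    rw [hgt] at hlt
    exact hlt
  -- existence via IVT
  set a : ℝ := S.inf' ⟨i0, hi0⟩ fun i => |x i| with hadef
  have ha0 : 0 < a := by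
    rw [hadef]; refine (Finset.lt_inf'_iff ..).mpr ?_
    intro i hi
    exact (Finset.mem_filter.mp hi).2
  have hga : g a = (S.card : ℝ) := by
    have hsqa : (0:ℝ) < a ^ 2 := by positivity
    have hterm : ∀ i, min (x i ^ 2) (a ^ 2) / a ^ 2 = (if i ∈ S then (1:ℝ) else 0) := by
      intro i
      by_cases hi : i ∈ S
      · have hxi : a ≤ |x i| := Finset.inf'_le _ hi
        have : a ^ 2 ≤ x i ^ 2 := by
          have := abs_nonneg (x i)
          nlinarith [sq_abs (x i)]
        rw [min_eq_right this, div_self hsqa.ne', if_pos hi]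
      · have hxi : ¬ 0 < |x i| := fun hx => hi (Finset.mem_filter.mpr ⟨Finset.mem_univ i, hx⟩)
        have hx0 : x i = 0 := abs_eq_zero.mp (le_antisymm (not_lt.mp hxi) (abs_nonneg _))
        rw [hx0, if_neg hi]
        norm_num [min_eq_left (sq_nonneg a)]
    rw [hgdef]
    simp only [hterm]
    rw [Finset.sum_ite_mem, Finset.univ_inter, Finset.sum_const, nsmul_eq_mul, mul_one]
  have hB0 : (0:ℝ) ≤ ∑ i, x i ^ 2 := Finset.sum_nonneg fun i _ => sq_nonneg _
  obtain ⟨T, haT, hTB⟩ : ∃ T : ℝ, a < T ∧ (∑ i, x i ^ 2) < t * T ^ 2 := by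
    refine ⟨max a (Real.sqrt ((∑ i, x i ^ 2) / t)) + 1, ?_, ?_⟩
    · have := le_max_left a (Real.sqrt ((∑ i, x i ^ 2) / t))
      linarith
    · have hs0 : 0 ≤ Real.sqrt ((∑ i, x i ^ 2) / t) := Real.sqrt_nonneg _
      have hs : Real.sqrt ((∑ i, x i ^ 2) / t)
          < max a (Real.sqrt ((∑ i, x i ^ 2) / t)) + 1 := by
        have := le_max_right a (Real.sqrt ((∑ i, x i ^ 2) / t))
        linarith
      have hsq : (∑ i, x i ^ 2) / t = Real.sqrt ((∑ i, x i ^ 2) / t) ^ 2 :=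
        (Real.sq_sqrt (by positivity)).symm
      have hlt : Real.sqrt ((∑ i, x i ^ 2) / t) ^ 2
          < (max a (Real.sqrt ((∑ i, x i ^ 2) / t)) + 1) ^ 2 := by nlinarith
      have h1 : (∑ i, x i ^ 2) / t < (max a (Real.sqrt ((∑ i, x i ^ 2) / t)) + 1) ^ 2 :=
        lt_of_le_of_lt hsq.le hlt
      calc (∑ i, x i ^ 2) = t * ((∑ i, x i ^ 2) / t) := by field_simp
        _ < t * (max a (Real.sqrt ((∑ i, x i ^ 2) / t)) + 1) ^ 2 := by
            exact mul_lt_mul_of_pos_left h1 ht0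
  have hT0 : 0 < T := lt_trans ha0 haT
  have hsqT : (0:ℝ) < T ^ 2 := by positivity
  have hgT : g T < t := by
    have h1 : g T ≤ (∑ i, x i ^ 2) / T ^ 2 := by
      rw [hgdef, Finset.sum_div]
      apply Finset.sum_le_sum
      intro i _
      gcongr
      exact min_le_left _ _
    have h2 : (∑ i, x i ^ 2) / T ^ 2 < t := by
      rw [div_lt_iff₀ hsqT]
      linarith
    linarith
  have hcont : ContinuousOn g (Set.Icc a T) := by
    apply continuousOn_finset_sum
    intro i _
    apply ContinuousOn.div
    · exact (continuous_const.min (continuous_pow 2)).continuousOn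
    · exact (continuous_pow 2).continuousOn
    · intro τ hτ
      have : 0 < τ := lt_of_lt_of_le ha0 hτ.1
      positivity
  have hmem : t ∈ Set.Icc (g T) (g a) := ⟨hgT.le, by rw [hga]; linarith⟩
  obtain ⟨τ, hτmem, hτeq⟩ := intermediate_value_Icc' haT.le hcont hmem
  have hτ0 : 0 < τ := lt_of_lt_of_le ha0 hτmem.1
  refine ⟨τ, ⟨hτ0, (hequiv τ).mpr hτeq⟩, ?_⟩
  rintro σ ⟨hσ0, hσeq⟩
  have hσg : g σ = t := (hequiv σ).mp hσeq
  rcases lt_trichotomy σ τ with h | h | h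
  · have := key σ τ hσ0 h hσg
    rw [hτeq] at this; exact absurd this (lt_irrefl t)
  · exact h
  · have := key τ σ hτ0 h hτeq
    rw [hσg] at this; exact absurd this (lt_irrefl t)
end
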